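/- arXiv:1808.01212 — 5 statements merged into one kernel-verified Lean document; each statement's English description precedes it below -/
import Mathlib

section
/- For every t ∈ G, the linear span of the set of functions of the form 1_t · 1_{r_1^{i_1}} ⋯ 1_{r_m^{i_m}} (with m ≥ 0 and (r_1,i_1), …, (r_m,i_m) ∈ G × I), restricted to X_t, is a dense *-subalgebra of C(X_t, ℂ). -/
/-- The space `X_G`: subsets `ξ` of `G × I` (with `I = J ⊔ {0}` realized as `Option J`,
`none` playing the role of `0`), identified with points of `{0,1}^(G × I)` with the
product topology, such that `(e, 0) ∈ ξ` and `(r, i) ∈ ξ` implies `(r, 0) ∈ ξ`. -/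
def XG (G : Type*) [Group G] (J : Type*) : Set ((G × Option J) → Bool) :=
  {ξ | ξ (1, none) = true ∧ ∀ (r : G) (i : Option J), ξ (r, i) = true → ξ (r, none) = true}

/-- For `t ∈ G`, the set `X_t = { ξ ∈ X_G : (t,0) ∈ ξ }`; it is clopen in the compact
Hausdorff space `X_G`, hence compact. -/
def Xt {G : Type*} [Group G] {J : Type*} (t : G) : Set ((G × Option J) → Bool) :=
  {ξ | ξ ∈ XG G J ∧ ξ (t, none) = true}

/-- The restriction to `X_t` of the characteristic function `1_{r^i} : ξ ↦ [ (r,i) ∈ ξ ]`,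
for `x = (r, i) ∈ G × I`, as an element of `C(X_t, ℂ)`. -/
noncomputable def chiXt {G : Type*} [Group G] {J : Type*} (t : G) (x : G × Option J) :
    C(Xt (J := J) t, ℂ) :=
  ⟨fun ξ => if (ξ : (G × Option J) → Bool) x = true then 1 else 0, by
    have h1 : Continuous fun ξ : Xt (J := J) t => (ξ : (G × Option J) → Bool) x :=
      (continuous_apply x).comp continuous_subtype_val
    exact (continuous_of_discreteTopology
      (f := fun b : Bool => if b = true then (1 : ℂ) else 0)).comp h1⟩

section aux
variable {G : Type*} [Group G] {J : Type*} (t : G)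

lemma isClosed_eval (x : G × Option J) : IsClosed {ξ : (G × Option J) → Bool | ξ x = true} := by
  have h : {ξ : (G × Option J) → Bool | ξ x = true}
      = (fun ξ : (G × Option J) → Bool => ξ x) ⁻¹' {true} := rfl
  rw [h]
  exact (isClosed_singleton (x := true)).preimage (continuous_apply x)

lemma isOpen_eval (x : G × Option J) : IsOpen {ξ : (G × Option J) → Bool | ξ x = true} := by
  have h : {ξ : (G × Option J) → Bool | ξ x = true}
      = (fun ξ : (G × Option J) → Bool => ξ x) ⁻¹' {true} := rfl
  rw [h]
  exact ((isOpen_discrete _).preimage (continuous_apply x))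

lemma isClosed_Xt : IsClosed (Xt (J := J) t) := by
  have : Xt (J := J) t = {ξ : (G × Option J) → Bool | ξ (1, none) = true} ∩
      ((⋂ (r : G) (i : Option J),
        ({ξ : (G × Option J) → Bool | ξ (r, i) = true}ᶜ ∪
          {ξ : (G × Option J) → Bool | ξ (r, none) = true})) ∩
        {ξ : (G × Option J) → Bool | ξ (t, none) = true}) := by
    ext ξ
    simp only [Xt, XG, Set.mem_inter_iff, Set.mem_iInter, Set.mem_union, Set.mem_compl_iff,
      Set.mem_setOf_eq]
    constructor
    · rintro ⟨⟨h1, h2⟩, h3⟩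
      exact ⟨h1, fun r i => (Decidable.em _).symm.imp_right (h2 r i), h3⟩
    · rintro ⟨h1, h2, h3⟩
      exact ⟨⟨h1, fun r i h => ((h2 r i).resolve_left (fun hn => hn h))⟩, h3⟩
  rw [this]
  refine (isClosed_eval _).inter (IsClosed.inter ?_ (isClosed_eval _))
  refine isClosed_iInter fun r => isClosed_iInter fun i =>
    ((isOpen_eval _).isClosed_compl.union (isClosed_eval _))

instance : CompactSpace (Xt (J := J) t) :=
  isCompact_iff_compactSpace.mp ((isClosed_Xt t).isCompact)

lemma star_chiXt (x : G × Option J) : star (chiXt t x) = chiXt t x := by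
  ext ξ
  simp only [ContinuousMap.star_apply, chiXt, ContinuousMap.coe_mk]
  split_ifs <;> simp

end aux


/-- For every `t ∈ G`, the linear span of the set of functions of the form
`1_t · 1_{r_1^{i_1}} ⋯ 1_{r_m^{i_m}}` (with `m ≥ 0`), restricted to `X_t` (where the
restriction of `1_t` is the constant `1`, so these restrictions are exactly the finite
products of the `chiXt t x`), is a dense *-subalgebra of `C(X_t, ℂ)`: it contains `1`,
is closed under multiplication and under `star`, and is dense. -/
theorem span_products_dense (G : Type*) [Group G] (J : Type*) (t : G) :
    (1 : C(Xt (J := J) t, ℂ)) ∈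
      Submodule.span ℂ {f : C(Xt (J := J) t, ℂ) |
        ∃ l : List (G × Option J), f = (l.map (chiXt t)).prod} ∧
    (∀ f g : C(Xt (J := J) t, ℂ),
      f ∈ Submodule.span ℂ {f : C(Xt (J := J) t, ℂ) |
          ∃ l : List (G × Option J), f = (l.map (chiXt t)).prod} →
      g ∈ Submodule.span ℂ {f : C(Xt (J := J) t, ℂ) |
          ∃ l : List (G × Option J), f = (l.map (chiXt t)).prod} →
      f * g ∈ Submodule.span ℂ {f : C(Xt (J := J) t, ℂ) |
          ∃ l : List (G × Option J), f = (l.map (chiXt t)).prod}) ∧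
    (∀ f : C(Xt (J := J) t, ℂ),
      f ∈ Submodule.span ℂ {f : C(Xt (J := J) t, ℂ) |
          ∃ l : List (G × Option J), f = (l.map (chiXt t)).prod} →
      star f ∈ Submodule.span ℂ {f : C(Xt (J := J) t, ℂ) |
          ∃ l : List (G × Option J), f = (l.map (chiXt t)).prod}) ∧
    Dense ((Submodule.span ℂ {f : C(Xt (J := J) t, ℂ) |
        ∃ l : List (G × Option J), f = (l.map (chiXt t)).prod} : Submodule ℂ _) :
          Set C(Xt (J := J) t, ℂ)) := by
  set S : Set C(Xt (J := J) t, ℂ) :=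
    {f : C(Xt (J := J) t, ℂ) | ∃ l : List (G × Option J), f = (l.map (chiXt t)).prod} with hS
  have hone : (1 : C(Xt (J := J) t, ℂ)) ∈ Submodule.span ℂ S :=
    Submodule.subset_span ⟨[], by simp⟩
  have hmul : ∀ f g : C(Xt (J := J) t, ℂ), f ∈ Submodule.span ℂ S →
      g ∈ Submodule.span ℂ S → f * g ∈ Submodule.span ℂ S := by
    intro f g hf hg
    induction hf using Submodule.span_induction with
    | mem f hf =>
      induction hg using Submodule.span_induction with
      | mem g hg =>
        obtain ⟨l, rfl⟩ := hf
        obtain ⟨l', rfl⟩ := hg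
        exact Submodule.subset_span ⟨l ++ l', by simp⟩
      | zero => simpa using Submodule.zero_mem _
      | add g₁ g₂ _ _ h1 h2 => rw [mul_add]; exact Submodule.add_mem _ h1 h2
      | smul c g₁ _ h1 => rw [mul_smul_comm]; exact Submodule.smul_mem _ _ h1
    | zero => simpa using Submodule.zero_mem _
    | add f₁ f₂ _ _ h1 h2 => rw [add_mul]; exact Submodule.add_mem _ h1 h2
    | smul c f₁ _ h1 => rw [smul_mul_assoc]; exact Submodule.smul_mem _ _ h1
  have hstar_gen : ∀ l : List (G × Option J),
      star ((l.map (chiXt t)).prod) = (l.map (chiXt t)).prod := by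
    intro l
    induction l with
    | nil => simp
    | cons a l ih =>
      simp only [List.map_cons, List.prod_cons, star_mul', star_chiXt, ih]
  have hstar : ∀ f : C(Xt (J := J) t, ℂ), f ∈ Submodule.span ℂ S →
      star f ∈ Submodule.span ℂ S := by
    intro f hf
    induction hf using Submodule.span_induction with
    | mem f hf =>
      obtain ⟨l, rfl⟩ := hf
      rw [hstar_gen]
      exact Submodule.subset_span ⟨l, rfl⟩
    | zero => simpa using Submodule.zero_mem _
    | add f₁ f₂ _ _ h1 h2 => rw [star_add]; exact Submodule.add_mem _ h1 h2
    | smul c f₁ _ h1 =>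
      rw [star_smul]
      exact Submodule.smul_mem _ _ h1
  refine ⟨hone, hmul, hstar, ?_⟩
  -- density via Stone–Weierstrass
  set A : StarSubalgebra ℂ C(Xt (J := J) t, ℂ) :=
    StarAlgebra.adjoin ℂ (Set.range (chiXt t)) with hA
  have hsep : A.SeparatesPoints := by
    intro ξ η hne
    obtain ⟨x, hx⟩ : ∃ x, (ξ : (G × Option J) → Bool) x ≠ (η : (G × Option J) → Bool) x := by
      by_contra h
      push_neg at h
      exact hne (Subtype.ext (funext h))
    refine ⟨_, ⟨chiXt t x, StarAlgebra.subset_adjoin ℂ _ ⟨x, rfl⟩, rfl⟩, ?_⟩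
    simp only [chiXt, ContinuousMap.coe_mk]
    rcases Bool.eq_false_or_eq_true ((ξ : (G × Option J) → Bool) x) with h | h <;>
      rcases Bool.eq_false_or_eq_true ((η : (G × Option J) → Bool) x) with h' | h' <;>
      simp_all
  have htop := ContinuousMap.starSubalgebra_topologicalClosure_eq_top_of_separatesPoints A hsep
  have hAle : (A : Set C(Xt (J := J) t, ℂ)) ⊆ (Submodule.span ℂ S : Set _) := by
    intro f hf
    induction hf using StarAlgebra.adjoin_induction with
    | mem x hx =>
      obtain ⟨y, rfl⟩ := hx
      exact Submodule.subset_span ⟨[y], by simp⟩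
    | algebraMap r =>
      have : (algebraMap ℂ C(Xt (J := J) t, ℂ)) r = r • 1 := by
        rw [Algebra.algebraMap_eq_smul_one]
      rw [this]
      exact Submodule.smul_mem _ _ hone
    | add x y _ _ h1 h2 => exact Submodule.add_mem _ h1 h2
    | mul x y _ _ h1 h2 => exact hmul _ _ h1 h2
    | star x _ h1 => exact hstar _ h1
  have : Dense (A : Set C(Xt (J := J) t, ℂ)) := by
    rw [dense_iff_closure_eq]
    have h1 : closure (A : Set C(Xt (J := J) t, ℂ)) = (A.topologicalClosure : Set _) := rfl
    rw [h1, htop]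
    rfl
  exact this.mono hAle
end

section
/- Let A be a unital C*-algebra, π : G → A a partial representation, and {P_i}_{i ∈ J} projections in A such that π(r)π(r)* commutes with π(s)P_jπ(s)* for all r, s ∈ G and j ∈ J, and π(r)P_iπ(r)* commutes with π(s)P_jπ(s)* for all r, s ∈ G and i, j ∈ J. Then there exists a unital *-homomorphism φ : C(X_G, ℂ) → A such that φ(1_{(r,i)}) = π(r) P_i π(r)* for all r ∈ G and i ∈ J, and φ(1_{(r,0)}) = π(r) π(r)* for all r ∈ G. -/
/-- The characteristic function `1_{r^i} : ξ ↦ [ (r,i) ∈ ξ ]`, for `x = (r, i) ∈ G × I`,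
as an element of `C(X_G, ℂ)`. -/
noncomputable def chiG {G : Type*} [Group G] {J : Type*} (x : G × Option J) :
    C(XG G J, ℂ) :=
  ⟨fun ξ => if (ξ : (G × Option J) → Bool) x = true then 1 else 0, by
    have h1 : Continuous fun ξ : XG G J => (ξ : (G × Option J) → Bool) x :=
      (continuous_apply x).comp continuous_subtype_val
    exact (continuous_of_discreteTopology
      (f := fun b : Bool => if b = true then (1 : ℂ) else 0)).comp h1⟩

private lemma idem_aux {M : Type*} [Monoid M] {a p s : M}
    (h1 : s * a * p = p * (s * a)) (h2 : p * p = p) (h3 : s * a * s = s) :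
    a * p * s * (a * p * s) = a * p * s := by
  have hinner : s * a * (p * s) = p * (s * a * s) := by
    rw [← mul_assoc, h1, mul_assoc]
  calc a * p * s * (a * p * s) = a * (p * (s * a * (p * s))) := by
        simp only [mul_assoc]
    _ = a * (p * (p * (s * a * s))) := by rw [hinner]
    _ = a * (p * (p * s)) := by rw [h3]
    _ = a * (p * p * s) := by rw [mul_assoc p p s]
    _ = a * p * s := by rw [h2, ← mul_assoc]

/-- The key construction: given a family of pairwise commuting self-adjoint idempotents
`e x` indexed by `G × Option J` with `e (1, none) = 1` and
`e (r, none) * e (r, i) = e (r, i)`, there is a unital star homomorphism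
`C(X_G, ℂ) → A` sending `chiG x` to `e x`. -/
private theorem exists_hom_aux {G : Type*} [Group G] {J : Type*} {A : Type*}
    [CStarAlgebra A] (e : G × Option J → A)
    (hsa : ∀ x, star (e x) = e x)
    (hid : ∀ x, e x * e x = e x)
    (hone : e (1, none) = 1)
    (habs : ∀ (r : G) (i : Option J), e (r, none) * e (r, i) = e (r, i))
    (hcm : ∀ x y, e x * e y = e y * e x) :
    ∃ φ : C(XG G J, ℂ) →⋆ₐ[ℂ] A, ∀ x, φ (chiG x) = e x := by
  classical
  set S : Set A := Set.range e with hS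
  set B : StarSubalgebra ℂ A := (StarAlgebra.adjoin ℂ S).topologicalClosure with hBdef
  have hmem : ∀ x, e x ∈ B :=
    fun x => StarSubalgebra.le_topologicalClosure _ (StarAlgebra.subset_adjoin ℂ S ⟨x, rfl⟩)
  haveI hBclosed : IsClosed (B : Set A) :=
    StarSubalgebra.isClosed_topologicalClosure _
  have h1 : ∀ a ∈ S, ∀ b ∈ S, a * b = b * a := by
    rintro a ⟨x, rfl⟩ b ⟨y, rfl⟩; exact hcm x y
  have h2 : ∀ a ∈ S, ∀ b ∈ S, a * star b = star b * a := by
    rintro a ⟨x, rfl⟩ b ⟨y, rfl⟩; rw [hsa]; exact hcm x y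
  have hmulcomm : ∀ x y : (StarAlgebra.adjoin ℂ S), x * y = y * x := by
    letI : CommSemiring (StarAlgebra.adjoin ℂ S) :=
      StarAlgebra.adjoinCommSemiringOfComm ℂ h1 h2
    exact fun x y => mul_comm x y
  have hmulB : ∀ x y : B, x * y = y * x := by
    letI : CommSemiring B :=
      StarSubalgebra.commSemiringTopologicalClosure _ hmulcomm
    exact fun x y => mul_comm x y
  letI : CommCStarAlgebra B :=
    { (inferInstance : CStarAlgebra B) with mul_comm := hmulB }
  set eB : G × Option J → B := fun x => ⟨e x, hmem x⟩ with heBdef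
  have heB1 : eB (1, none) = 1 := Subtype.ext hone
  have heBid : ∀ x, eB x * eB x = eB x := fun x => Subtype.ext (hid x)
  have heBabs : ∀ (r : G) (i : Option J), eB (r, none) * eB (r, i) = eB (r, i) :=
    fun r i => Subtype.ext (habs r i)
  -- characters take values 0 or 1 on projections
  have hdi : ∀ (χ : WeakDual.characterSpace ℂ B) x, χ (eB x) = 0 ∨ χ (eB x) = 1 := by
    intro χ x
    have h := congrArg χ (heBid x)
    rw [map_mul] at h
    have h' : χ (eB x) * (χ (eB x) - 1) = 0 := by ring_nf; linear_combination h
    rcases mul_eq_zero.mp h' with h0 | h1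
    · exact Or.inl h0
    · exact Or.inr (sub_eq_zero.mp h1)
  -- the map from the character space to X_G
  have hTmem : ∀ χ : WeakDual.characterSpace ℂ B,
      (fun x => decide (χ (eB x) = 1)) ∈ XG G J := by
    intro χ
    constructor
    · have : χ (eB (1, none)) = 1 := by rw [heB1, map_one]
      simpa using this
    · intro r i h
      have h' : χ (eB (r, i)) = 1 := of_decide_eq_true h
      have hm := congrArg χ (heBabs r i)
      rw [map_mul, h', mul_one] at hm
      simpa using hm
  set T : WeakDual.characterSpace ℂ B → XG G J :=
    fun χ => ⟨fun x => decide (χ (eB x) = 1), hTmem χ⟩ with hTdef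
  have hTcont : Continuous T := by
    apply Continuous.subtype_mk
    apply continuous_pi
    intro x
    have hev : Continuous fun χ : WeakDual.characterSpace ℂ B => χ (eB x) :=
      (WeakDual.eval_continuous (eB x)).comp continuous_subtype_val
    rw [continuous_discrete_rng]
    intro b
    cases b
    · have : ((fun χ : WeakDual.characterSpace ℂ B => decide (χ (eB x) = 1)) ⁻¹' {false})
          = (fun χ : WeakDual.characterSpace ℂ B => χ (eB x)) ⁻¹' ({1}ᶜ) := by
        ext χ; simp
      rw [this]
      exact (isClosed_singleton.isOpen_compl).preimage hev
    · have : ((fun χ : WeakDual.characterSpace ℂ B => decide (χ (eB x) = 1)) ⁻¹' {true})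
          = (fun χ : WeakDual.characterSpace ℂ B => χ (eB x)) ⁻¹' ({0}ᶜ) := by
        ext χ
        simp only [Set.mem_preimage, Set.mem_singleton_iff, decide_eq_true_eq,
          Set.mem_compl_iff]
        constructor
        · intro h; rw [h]; exact one_ne_zero
        · intro h; rcases hdi χ x with h0 | h1
          · exact absurd h0 h
          · exact h1
      rw [this]
      exact (isClosed_singleton.isOpen_compl).preimage hev
  set Tc : C(WeakDual.characterSpace ℂ B, XG G J) := ⟨T, hTcont⟩ with hTcdef
  set ψ : C(XG G J, ℂ) →⋆ₐ[ℂ] C(WeakDual.characterSpace ℂ B, ℂ) :=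
    ContinuousMap.compStarAlgHom' ℂ ℂ Tc with hψdef
  set ρ : C(WeakDual.characterSpace ℂ B, ℂ) →⋆ₐ[ℂ] B :=
    StarAlgHomClass.toStarAlgHom (gelfandStarTransform B).symm with hρdef
  refine ⟨(B.subtype.comp ρ).comp ψ, ?_⟩
  intro x
  have hkey : ψ (chiG x) = gelfandStarTransform B (eB x) := by
    ext χ
    show chiG x (Tc χ) = _
    have hco : ((Tc χ : XG G J) : (G × Option J) → Bool) x = decide (χ (eB x) = 1) := rfl
    rcases hdi χ x with h0 | h1
    · have : chiG x (Tc χ) = 0 := by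
        show (if ((Tc χ : XG G J) : (G × Option J) → Bool) x = true then (1:ℂ) else 0) = 0
        rw [hco]
        simp [h0]
      rw [this, gelfandStarTransform_apply_apply, h0]
    · have : chiG x (Tc χ) = 1 := by
        show (if ((Tc χ : XG G J) : (G × Option J) → Bool) x = true then (1:ℂ) else 0) = 1
        rw [hco]
        simp [h1]
      rw [this, gelfandStarTransform_apply_apply, h1]
  have : ρ (ψ (chiG x)) = eB x := by
    rw [hkey]
    exact (gelfandStarTransform B).symm_apply_apply (eB x)
  show B.subtype (ρ (ψ (chiG x))) = e x
  rw [this]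
  rfl

/-- Let `A` be a unital C*-algebra, `π : G → A` a partial representation (`π(e) = 1`,
`π(g⁻¹) = π(g)*`, `π(g)π(h)π(h⁻¹) = π(gh)π(h⁻¹)`), and `{P_i}_{i ∈ J}` projections in `A`
such that `π(r)π(r)*` commutes with `π(s)P_jπ(s)*` for all `r, s ∈ G`, `j ∈ J`, and
`π(r)P_iπ(r)*` commutes with `π(s)P_jπ(s)*` for all `r, s ∈ G`, `i, j ∈ J`.  Then there
exists a unital *-homomorphism `φ : C(X_G, ℂ) → A` such that
`φ(1_{(r,i)}) = π(r) P_i π(r)*` for all `r ∈ G`, `i ∈ J`, and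
`φ(1_{(r,0)}) = π(r) π(r)*` for all `r ∈ G`. -/
theorem exists_starAlgHom_of_partialRep (G : Type*) [Group G] (J : Type*)
    (A : Type*) [CStarAlgebra A] (π : G → A) (P : J → A)
    (hπe : π 1 = 1)
    (hπinv : ∀ g : G, π g⁻¹ = star (π g))
    (hπmul : ∀ g h : G, π g * π h * π h⁻¹ = π (g * h) * π h⁻¹)
    (hP : ∀ i : J, star (P i) = P i ∧ P i * P i = P i)
    (hcomm₁ : ∀ (r s : G) (j : J),
      Commute (π r * star (π r)) (π s * P j * star (π s)))
    (hcomm₂ : ∀ (r s : G) (i j : J),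
      Commute (π r * P i * star (π r)) (π s * P j * star (π s))) :
    ∃ φ : C(XG G J, ℂ) →⋆ₐ[ℂ] A,
      (∀ (r : G) (i : J), φ (chiG (r, some i)) = π r * P i * star (π r)) ∧
      (∀ r : G, φ (chiG (r, none)) = π r * star (π r)) := by
  classical
  -- basic consequences of the partial representation axioms
  have hpi : ∀ g : G, π g * star (π g) * π g = π g := by
    intro g
    have h := hπmul g g⁻¹
    rw [inv_inv, mul_inv_cancel, hπe, one_mul] at h
    rw [hπinv g] at h
    exact h
  have hspi : ∀ g : G, star (π g) * π g * star (π g) = star (π g) := by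
    intro g
    have h := congrArg star (hpi g)
    simpa [star_mul, mul_assoc] using h
  -- the exchange lemma: π g · e(h) = e(gh) · π g
  have hex : ∀ g h : G, π g * (π h * star (π h)) = π (g * h) * star (π (g * h)) * π g := by
    intro g h
    have h1 := hπmul g h
    rw [hπinv h] at h1
    have h2 := hπmul g⁻¹ (g * h)
    rw [inv_mul_cancel_left] at h2
    have h3 := congrArg star h2
    simp only [star_mul, hπinv, star_star, ← mul_assoc] at h3
    calc π g * (π h * star (π h)) = π g * π h * star (π h) := by rw [← mul_assoc]
      _ = π (g * h) * star (π h) := h1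
      _ = π (g * h) * star (π (g * h)) * π g := h3.symm
  -- commutation of the "range projections" e(g) = π g (π g)*
  have hcomm₀ : ∀ g h : G,
      (π g * star (π g)) * (π h * star (π h)) = (π h * star (π h)) * (π g * star (π g)) := by
    intro g h
    have hkey : (π g * star (π g)) * (π h * star (π h))
        = π g * (π (g⁻¹ * h) * star (π (g⁻¹ * h))) * star (π g) := by
      have hx := hex g⁻¹ h
      rw [hπinv g] at hx
      calc (π g * star (π g)) * (π h * star (π h))
          = π g * (star (π g) * (π h * star (π h))) := by rw [mul_assoc]
        _ = π g * (π (g⁻¹ * h) * star (π (g⁻¹ * h)) * star (π g)) := by rw [hx]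
        _ = π g * (π (g⁻¹ * h) * star (π (g⁻¹ * h))) * star (π g) := by
            simp only [mul_assoc]
    have hsa' : star ((π g * star (π g)) * (π h * star (π h)))
        = (π g * star (π g)) * (π h * star (π h)) := by
      rw [hkey]
      simp [star_mul, mul_assoc]
    calc (π g * star (π g)) * (π h * star (π h))
        = star ((π g * star (π g)) * (π h * star (π h))) := hsa'.symm
      _ = star (π h * star (π h)) * star (π g * star (π g)) := by rw [star_mul]
      _ = (π h * star (π h)) * (π g * star (π g)) := by simp [star_mul, mul_assoc]
  -- star (π r) * π r commutes with P j
  have hq : ∀ (r : G) (j : J), star (π r) * π r * P j = P j * (star (π r) * π r) := by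
    intro r j
    have h := (hcomm₁ r⁻¹ 1 j).eq
    simp only [hπe, hπinv, star_star, star_one, one_mul, mul_one] at h
    exact h
  -- the family of commuting projections
  set e : G × Option J → A := fun x =>
    Option.rec (π x.1 * star (π x.1)) (fun i => π x.1 * P i * star (π x.1)) x.2 with hedef
  have hsa : ∀ x, star (e x) = e x := by
    rintro ⟨r, _ | i⟩
    · show star (π r * star (π r)) = π r * star (π r)
      simp [star_mul, mul_assoc]
    · show star (π r * P i * star (π r)) = π r * P i * star (π r)
      simp [star_mul, star_star, (hP i).1, mul_assoc]
  have hid : ∀ x, e x * e x = e x := by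
    rintro ⟨r, _ | i⟩
    · show π r * star (π r) * (π r * star (π r)) = π r * star (π r)
      calc π r * star (π r) * (π r * star (π r))
          = π r * star (π r) * π r * star (π r) := by rw [← mul_assoc]
        _ = π r * star (π r) := by rw [hpi]
    · show π r * P i * star (π r) * (π r * P i * star (π r)) = π r * P i * star (π r)
      exact idem_aux (hq r i) (hP i).2 (hspi r)
  have hone : e (1, none) = 1 := by
    show π 1 * star (π 1) = 1
    simp [hπe]
  have habs : ∀ (r : G) (i : Option J), e (r, none) * e (r, i) = e (r, i) := by
    rintro r (_ | i)
    · exact hid (r, none)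
    · show π r * star (π r) * (π r * P i * star (π r)) = π r * P i * star (π r)
      calc π r * star (π r) * (π r * P i * star (π r))
          = π r * star (π r) * π r * P i * star (π r) := by simp only [mul_assoc]
        _ = π r * P i * star (π r) := by rw [hpi]
  have hcm : ∀ x y, e x * e y = e y * e x := by
    rintro ⟨r, _ | i⟩ ⟨s, _ | j⟩
    · exact hcomm₀ r s
    · exact (hcomm₁ r s j).eq
    · exact (hcomm₁ s r i).eq.symm
    · exact (hcomm₂ r s i j).eq
  obtain ⟨φ, hφ⟩ := exists_hom_aux e hsa hid hone habs hcm
  exact ⟨φ, fun r i => hφ (r, some i), fun r => hφ (r, none)⟩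
end

section
/- Let A be a unital C*-algebra, π : G → A a partial representation, {P_i}_{i ∈ J} projections in A such that π(r)π(r)* commutes with π(s)P_jπ(s)* and π(r)P_iπ(r)* commutes with π(s)P_jπ(s)* for all r, s ∈ G and i, j ∈ J, and let φ : C(X_G, ℂ) → A be a unital *-homomorphism with φ(1_{(r,i)}) = π(r) P_i π(r)* for i ∈ J and φ(1_{(r,0)}) = π(r) π(r)* for all r ∈ G. Then the pair (φ, π) is covariant: for every t ∈ G and every f ∈ C(X_G, ℂ) vanishing off X_{t⁻¹}, one has φ(α_t(f)) = π(t) φ(f) π(t)*. -/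
/-- The translate `tξ = { (t r, i) : (r, i) ∈ ξ }`: `(g, i) ∈ tξ` iff `(t⁻¹ g, i) ∈ ξ`. -/
def act {G : Type*} [Group G] {J : Type*} (t : G) (ξ : (G × Option J) → Bool) :
    (G × Option J) → Bool :=
  fun x => ξ (t⁻¹ * x.1, x.2)

/-- If `ξ ∈ X_G` and `(t, 0) ∈ ξ`, then `t⁻¹ξ ∈ X_G`. -/
theorem act_inv_mem {G : Type*} [Group G] {J : Type*} {t : G}
    {ξ : (G × Option J) → Bool} (hξ : ξ ∈ XG G J) (h : ξ (t, none) = true) :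
    act t⁻¹ ξ ∈ XG G J := by
  constructor
  · show ξ (t⁻¹⁻¹ * 1, none) = true
    rw [inv_inv, mul_one]; exact h
  · intro r i hri
    exact hξ.2 _ _ hri

/-- For `t ∈ G` and `f ∈ C(X_G, ℂ)`, the function `α_t(f) : X_G → ℂ` which is equal to
`f ∘ θ_{t⁻¹}` on `X_t = { ξ ∈ X_G : (t,0) ∈ ξ }` and `0` off `X_t`. -/
noncomputable def alphaMap {G : Type*} [Group G] {J : Type*} (t : G)
    (f : C(XG G J, ℂ)) : XG G J → ℂ :=
  fun ξ => if h : (ξ : (G × Option J) → Bool) (t, none) = true then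
    f ⟨act t⁻¹ (ξ : (G × Option J) → Bool), act_inv_mem ξ.2 h⟩ else 0


/-! ### Auxiliary topology and function lemmas -/

section Aux

variable {G : Type*} [Group G] {J : Type*}

lemma isClosed_XG (G : Type*) [Group G] (J : Type*) : IsClosed (XG G J) := by
  have hcl : ∀ (x : G × Option J), IsClosed {ξ : (G × Option J) → Bool | ξ x = true} := by
    intro x
    have he : {ξ : (G × Option J) → Bool | ξ x = true}
        = (fun ξ : (G × Option J) → Bool => ξ x) ⁻¹' {true} := rfl
    rw [he]
    exact (isClosed_discrete _).preimage (continuous_apply x)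
  have hop : ∀ (x : G × Option J), IsOpen {ξ : (G × Option J) → Bool | ξ x = true} := by
    intro x
    have he : {ξ : (G × Option J) → Bool | ξ x = true}
        = (fun ξ : (G × Option J) → Bool => ξ x) ⁻¹' {true} := rfl
    rw [he]
    exact (isOpen_discrete _).preimage (continuous_apply x)
  have : XG G J = {ξ : (G × Option J) → Bool | ξ (1, none) = true} ∩
      ⋂ (p : G × Option J), ({ξ : (G × Option J) → Bool | ξ p = true}ᶜ ∪
        {ξ : (G × Option J) → Bool | ξ (p.1, none) = true}) := by
    ext ξ
    simp only [XG, Set.mem_setOf_eq, Set.mem_inter_iff, Set.mem_iInter, Set.mem_union,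
      Set.mem_compl_iff]
    constructor
    · rintro ⟨h1, h2⟩
      refine ⟨h1, fun p => ?_⟩
      by_cases hp : ξ p = true
      · exact Or.inr (h2 p.1 p.2 hp)
      · exact Or.inl hp
    · rintro ⟨h1, h2⟩
      refine ⟨h1, fun r i h => ?_⟩
      rcases h2 (r, i) with h' | h'
      · exact absurd h h'
      · exact h'
  rw [this]
  exact (hcl _).inter (isClosed_iInter fun p => ((hop p).isClosed_compl.union (hcl _)))

instance XG.compactSpace : CompactSpace (XG G J) :=
  isCompact_iff_compactSpace.mp ((isClosed_XG G J).isCompact)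

open Classical in
noncomputable def thetaFun (t : G) (ξ : (G × Option J) → Bool) : (G × Option J) → Bool :=
  fun x => (ξ (t * x.1, x.2) && ξ (t, none)) ||
    (if x = ((1 : G), (none : Option J)) then true else false)

lemma thetaFun_mem {t : G} {ξ : (G × Option J) → Bool} (hξ : ξ ∈ XG G J) :
    thetaFun t ξ ∈ XG G J := by
  constructor
  · simp [thetaFun]
  · intro r i h
    simp only [thetaFun, Bool.or_eq_true, Bool.and_eq_true] at h ⊢
    rcases h with ⟨h1, h2⟩ | h3
    · exact Or.inl ⟨hξ.2 _ _ h1, h2⟩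
    · right
      by_cases hc : (r, i) = ((1 : G), (none : Option J))
      · have hr : r = 1 := (Prod.mk.injEq _ _ _ _).mp hc |>.1
        subst hr
        simp
      · simp [hc] at h3

noncomputable def thetaC (t : G) : C(XG G J, XG G J) :=
  ⟨fun ξ => ⟨thetaFun t ξ.1, thetaFun_mem ξ.2⟩, by
    classical
    refine Continuous.subtype_mk ?_ _
    refine continuous_pi fun x => ?_
    have h1 : Continuous fun ξ : XG G J =>
        ((ξ : (G × Option J) → Bool) (t * x.1, x.2), (ξ : (G × Option J) → Bool) (t, none)) :=
      ((continuous_apply _).comp continuous_subtype_val).prodMk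
        ((continuous_apply _).comp continuous_subtype_val)
    exact (continuous_of_discreteTopology
      (f := fun p : Bool × Bool => (p.1 && p.2) ||
        (if x = ((1 : G), (none : Option J)) then true else false))).comp h1⟩

lemma thetaFun_eq_of_mem {t : G} {ξ : (G × Option J) → Bool} (hξ : ξ ∈ XG G J)
    (h : ξ (t, none) = true) (x : G × Option J) :
    thetaFun t ξ x = ξ (t * x.1, x.2) := by
  simp only [thetaFun, h, Bool.and_true]
  by_cases hx : x = ((1 : G), (none : Option J))
  · subst hx
    simp [h]
  · simp [hx]

lemma chiG_apply (x : G × Option J) (ξ : XG G J) :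
    chiG x ξ = if (ξ : (G × Option J) → Bool) x = true then 1 else 0 := rfl

lemma chiG_theta (t : G) (x : G × Option J) {ξ : XG G J}
    (h : (ξ : (G × Option J) → Bool) (t, none) = true) :
    chiG x (thetaC t ξ) = chiG (t * x.1, x.2) ξ := by
  show (if thetaFun t ξ.1 x = true then (1:ℂ) else 0) = _
  rw [thetaFun_eq_of_mem ξ.2 h]
  rfl

lemma star_chiG (x : G × Option J) : star (chiG x) = chiG x := by
  ext ξ
  rw [ContinuousMap.star_apply, chiG_apply]
  split_ifs <;> simp

lemma alphaMap_eq (t : G) (f : C(XG G J, ℂ)) :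
    alphaMap t f = ⇑(chiG ((t : G), (none : Option J)) * f.comp (thetaC t)) := by
  funext ξ
  by_cases h : (ξ : (G × Option J) → Bool) (t, none) = true
  · have h1 : alphaMap t f ξ = f ⟨act t⁻¹ ξ.1, act_inv_mem ξ.2 h⟩ := dif_pos h
    have h2 : (⟨act t⁻¹ ξ.1, act_inv_mem ξ.2 h⟩ : XG G J) = thetaC t ξ := by
      apply Subtype.ext
      funext x
      show ξ.1 ((t⁻¹)⁻¹ * x.1, x.2) = thetaFun t ξ.1 x
      rw [thetaFun_eq_of_mem ξ.2 h, inv_inv]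
    rw [h1, h2]
    show f (thetaC t ξ) = chiG (t, none) ξ * f (thetaC t ξ)
    rw [chiG_apply, if_pos h, one_mul]
  · have h1 : alphaMap t f ξ = 0 := dif_neg h
    rw [h1]
    show (0:ℂ) = chiG (t, none) ξ * f (thetaC t ξ)
    rw [chiG_apply, if_neg h, zero_mul]

lemma cm_list_prod_apply (l : List C(XG G J, ℂ)) (ξ : XG G J) :
    l.prod ξ = (l.map fun h => h ξ).prod := by
  induction l with
  | nil => simp
  | cons a l ih => simp [List.prod_cons, ih]

lemma key_fn (t : G) (L : List (G × Option J)) :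
    chiG ((t : G), (none : Option J)) *
        ((chiG ((t⁻¹ : G), (none : Option J)) * (L.map chiG).prod).comp (thetaC t))
      = chiG ((t : G), (none : Option J)) *
          (L.map fun x => chiG (t * x.1, x.2)).prod := by
  ext ξ
  by_cases h : (ξ : (G × Option J) → Bool) (t, none) = true
  · have hχt : chiG ((t : G), (none : Option J)) ξ = 1 := by rw [chiG_apply, if_pos h]
    have hχ : chiG ((t⁻¹ : G), (none : Option J)) (thetaC t ξ) = 1 := by
      rw [chiG_theta t _ h, chiG_apply]
      have : (ξ : (G × Option J) → Bool) (t * t⁻¹, none) = true := by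
        rw [mul_inv_cancel]; exact ξ.2.1
      rw [if_pos this]
    simp only [ContinuousMap.mul_apply, ContinuousMap.comp_apply, hχt, one_mul, hχ]
    rw [cm_list_prod_apply, cm_list_prod_apply, List.map_map, List.map_map]
    congr 1
    refine List.map_congr_left fun x hx => ?_
    show chiG x (thetaC t ξ) = chiG (t * x.1, x.2) ξ
    exact chiG_theta t x h
  · have hχt : chiG ((t : G), (none : Option J)) ξ = 0 := by rw [chiG_apply, if_neg h]
    simp only [ContinuousMap.mul_apply, hχt, zero_mul]

end Aux

/-! ### Partial representation algebra -/

section PR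

variable {G : Type*} [Group G] {A : Type*} [Monoid A] [StarMul A]

lemma pr_h0 (π : G → A) (hπe : π 1 = 1)
    (hπmul : ∀ g h : G, π g * π h * π h⁻¹ = π (g * h) * π h⁻¹) (a : G) :
    π a * (π a⁻¹ * π a) = π a := by
  have h := hπmul a a⁻¹
  rw [inv_inv, mul_inv_cancel, hπe, one_mul] at h
  rw [← mul_assoc]
  exact h

lemma pr_lemA' (π : G → A) (hπe : π 1 = 1)
    (hπmul : ∀ g h : G, π g * π h * π h⁻¹ = π (g * h) * π h⁻¹) (a b : G) :
    π a * π b = π (a * b) * (π b⁻¹ * π b) := by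
  have h1 := hπmul a b
  have h2 := congrArg (· * π b) h1
  simp only [mul_assoc] at h2
  rw [pr_h0 π hπe hπmul b] at h2
  exact h2

lemma pr_lemA (π : G → A) (hπe : π 1 = 1) (hπinv : ∀ g : G, π g⁻¹ = star (π g))
    (hπmul : ∀ g h : G, π g * π h * π h⁻¹ = π (g * h) * π h⁻¹) (a b : G) :
    π a * π b = π a * (π a⁻¹ * π (a * b)) := by
  have h1 := pr_lemA' π hπe hπmul b⁻¹ a⁻¹
  have h2 := congrArg star h1
  simp only [star_mul, star_star, ← hπinv, inv_inv, mul_inv_rev, mul_assoc] at h2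
  exact h2

end PR

def prE {G A : Type*} [Mul A] [Star A] (π : G → A) (r : G) : A := π r * star (π r)

def prQ {G : Type*} {J : Type*} {A : Type*} [Monoid A] [Star A]
    (π : G → A) (P : J → A) (r : G) (i : Option J) : A :=
  π r * (Option.elim i 1 P) * star (π r)


/-- Let `A` be a unital C*-algebra, `π : G → A` a partial representation, `{P_i}_{i ∈ J}`
projections in `A` with the stated commutation properties, and `φ : C(X_G, ℂ) → A` a
unital *-homomorphism with `φ(1_{(r,i)}) = π(r)P_iπ(r)*` for `i ∈ J` and
`φ(1_{(r,0)}) = π(r)π(r)*` for all `r ∈ G`.  Then the pair `(φ, π)` is covariant: for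
every `t ∈ G` and every `f ∈ C(X_G, ℂ)` vanishing off `X_{t⁻¹}`, one has
`φ(α_t(f)) = π(t) φ(f) π(t)*`. -/
theorem covariant_pair (G : Type*) [Group G] (J : Type*)
    (A : Type*) [CStarAlgebra A] (π : G → A) (P : J → A)
    (hπe : π 1 = 1)
    (hπinv : ∀ g : G, π g⁻¹ = star (π g))
    (hπmul : ∀ g h : G, π g * π h * π h⁻¹ = π (g * h) * π h⁻¹)
    (hP : ∀ i : J, star (P i) = P i ∧ P i * P i = P i)
    (hcomm₁ : ∀ (r s : G) (j : J),
      Commute (π r * star (π r)) (π s * P j * star (π s)))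
    (hcomm₂ : ∀ (r s : G) (i j : J),
      Commute (π r * P i * star (π r)) (π s * P j * star (π s)))
    (φ : C(XG G J, ℂ) →⋆ₐ[ℂ] A)
    (hφ₁ : ∀ (r : G) (i : J), φ (chiG (r, some i)) = π r * P i * star (π r))
    (hφ₂ : ∀ r : G, φ (chiG (r, none)) = π r * star (π r)) :
    ∀ (t : G) (f : C(XG G J, ℂ)),
      (∀ ξ : XG G J, (ξ : (G × Option J) → Bool) (t⁻¹, none) = false → f ξ = 0) →
      ∀ g : C(XG G J, ℂ), ⇑g = alphaMap t f → φ g = π t * φ f * star (π t) := by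
  intro t f hf g hg
  -- ## Algebraic facts about the partial representation
  have hss : ∀ a : G, star (π a⁻¹) = π a := fun a => by rw [hπinv, star_star]
  have h0 : ∀ a : G, π a * (π a⁻¹ * π a) = π a := pr_h0 π hπe hπmul
  have lemA' := pr_lemA' π hπe hπmul
  have lemA := pr_lemA π hπe hπinv hπmul
  have hE : ∀ r : G, prE π r = π r * π r⁻¹ := fun r => by rw [hπinv]; rfl
  have hQ_some : ∀ (r : G) (i : J), prQ π P r (some i) = π r * P i * star (π r) :=
    fun r i => rfl
  have hQ_none : ∀ r : G, prQ π P r none = prE π r := fun r => by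
    show π r * 1 * star (π r) = _
    rw [mul_one]; rfl
  have hE_sa : ∀ r : G, star (prE π r) = prE π r := fun r => by
    show star (π r * star (π r)) = _
    rw [star_mul, star_star]; rfl
  have hQ_sa : ∀ (r : G) (i : Option J), star (prQ π P r i) = prQ π P r i := by
    intro r i
    cases i with
    | none => rw [hQ_none]; exact hE_sa r
    | some i =>
      rw [hQ_some]
      simp only [star_mul, star_star, (hP i).1, mul_assoc]
  have hE_mul_pi : ∀ a : G, π a * star (π a) * π a = π a := fun a => by
    rw [← hπinv a, mul_assoc]; exact h0 a
  have hE_idem : ∀ r : G, prE π r * prE π r = prE π r := fun r => by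
    show (π r * star (π r)) * (π r * star (π r)) = π r * star (π r)
    rw [← mul_assoc, hE_mul_pi]
  have v0 : ∀ (a : G) (x : A), π a * (π a⁻¹ * (π a * x)) = π a * x := by
    intro a x
    have h := congrArg (· * x) (h0 a)
    simp only [mul_assoc] at h
    exact h
  have estep : ∀ r s : G,
      prE π r * prE π s = π r * (π (r⁻¹ * s) * (π (s⁻¹ * r) * π r⁻¹)) := by
    intro r s
    have e1 : prE π r * prE π s = π r * (π r⁻¹ * (π s * π s⁻¹)) := by
      rw [hE, hE]; simp only [mul_assoc]
    have e2 : π r⁻¹ * (π s * π s⁻¹) = π r⁻¹ * (π r * (π (r⁻¹ * s) * π s⁻¹)) := by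
      have h := congrArg (· * π s⁻¹) (lemA r⁻¹ s)
      simp only [mul_assoc, inv_inv] at h
      exact h
    rw [e1, e2, v0]
    congr 1
    have h := lemA (r⁻¹ * s) s⁻¹
    simp only [mul_inv_rev, inv_inv, mul_assoc, mul_inv_cancel, mul_one] at h
    exact h
  have hE_comm : ∀ r s : G, Commute (prE π r) (prE π s) := by
    intro r s
    have h2 : star (prE π r * prE π s) = prE π r * prE π s := by
      rw [estep r s]
      simp only [star_mul, ← hπinv, mul_inv_rev, inv_inv, mul_assoc]
    calc prE π r * prE π s = star (prE π r * prE π s) := h2.symm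
      _ = star (prE π s) * star (prE π r) := by rw [star_mul]
      _ = prE π s * prE π r := by rw [hE_sa, hE_sa]
  have hQQ : ∀ (r : G) (i : Option J) (s : G) (j : Option J),
      Commute (prQ π P r i) (prQ π P s j) := by
    intro r i s j
    cases i with
    | none =>
      cases j with
      | none => rw [hQ_none, hQ_none]; exact hE_comm r s
      | some j => rw [hQ_none, hQ_some]; exact hcomm₁ r s j
    | some i =>
      cases j with
      | none => rw [hQ_some, hQ_none]; exact (hcomm₁ s r i).symm
      | some j => rw [hQ_some, hQ_some]; exact hcomm₂ r s i j
  have hφQ : ∀ (r : G) (i : Option J), φ (chiG (r, i)) = prQ π P r i := by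
    intro r i
    cases i with
    | none => rw [hφ₂ r, hQ_none]; rfl
    | some i => rw [hφ₁ r i, hQ_some]
  have lemAst : ∀ a b : G, π a * π b = prE π a * π (a * b) := by
    intro a b
    show _ = (π a * star (π a)) * π (a * b)
    rw [lemA a b, ← mul_assoc, hπinv]
  have hEQcomm : ∀ (s : G) (i : Option J), Commute (prE π t) (prQ π P s i) := by
    intro s i
    have h := hQQ t none s i
    rwa [hQ_none] at h
  have hconj : ∀ (r : G) (i : Option J),
      π t * prQ π P r i * star (π t) = prE π t * prQ π P (t * r) i := by
    intro r i
    calc π t * prQ π P r i * star (π t)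
        = (π t * π r) * Option.elim i 1 P * star (π t * π r) := by
          show π t * (π r * Option.elim i 1 P * star (π r)) * star (π t) = _
          rw [star_mul]
          simp only [mul_assoc]
      _ = (prE π t * π (t * r)) * Option.elim i 1 P * star (prE π t * π (t * r)) := by
          rw [lemAst]
      _ = prE π t * (π (t * r) * Option.elim i 1 P * star (π (t * r))) * star (prE π t) := by
          rw [star_mul]
          simp only [mul_assoc]
      _ = prE π t * prQ π P (t * r) i * prE π t := by rw [hE_sa]; rfl
      _ = prE π t * (prQ π P (t * r) i * prE π t) := by rw [mul_assoc]
      _ = prE π t * (prE π t * prQ π P (t * r) i) := by rw [← (hEQcomm (t * r) i).eq]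
      _ = (prE π t * prE π t) * prQ π P (t * r) i := by rw [← mul_assoc]
      _ = prE π t * prQ π P (t * r) i := by rw [hE_idem]
  have hπt : π t * prQ π P t⁻¹ none = π t := by
    rw [hQ_none, hE, inv_inv]
    rw [← mul_assoc]
    have h := h0 t
    rw [← mul_assoc] at h
    exact h
  have hQtt : prQ π P t⁻¹ none = star (π t) * π t := by
    rw [hQ_none]
    show π t⁻¹ * star (π t⁻¹) = star (π t) * π t
    rw [hss t, hπinv t]
  have hsts : star (π t) * (π t * star (π t)) = star (π t) := by
    have h := congrArg star (hE_mul_pi t)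
    simp only [star_mul, star_star, mul_assoc] at h
    exact h
  have hprod : ∀ L : List (G × Option J),
      π t * (L.map fun x => prQ π P x.1 x.2).prod * star (π t)
        = prE π t * (L.map fun x => prQ π P (t * x.1) x.2).prod := by
    intro L
    induction L with
    | nil =>
      simp only [List.map_nil, List.prod_nil, mul_one]
      rfl
    | cons x L ih =>
      simp only [List.map_cons, List.prod_cons]
      have hcR : Commute (prQ π P t⁻¹ none) ((L.map fun x => prQ π P x.1 x.2).prod) := by
        refine Commute.list_prod_right _ _ fun y hy => ?_
        obtain ⟨z, hz, rfl⟩ := List.mem_map.mp hy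
        exact hQQ t⁻¹ none z.1 z.2
      have h2 : prQ π P t⁻¹ none * star (π t) = star (π t) := by
        rw [hQtt, mul_assoc]
        exact hsts
      have key : (π t * prQ π P x.1 x.2 * star (π t)) *
            (π t * (L.map fun x => prQ π P x.1 x.2).prod * star (π t))
          = π t * (prQ π P x.1 x.2 * (L.map fun x => prQ π P x.1 x.2).prod) * star (π t) := by
        calc (π t * prQ π P x.1 x.2 * star (π t)) *
              (π t * (L.map fun x => prQ π P x.1 x.2).prod * star (π t))
            = π t * (prQ π P x.1 x.2 * ((star (π t) * π t) *
                ((L.map fun x => prQ π P x.1 x.2).prod * star (π t)))) := by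
              simp only [mul_assoc]
          _ = π t * (prQ π P x.1 x.2 * (prQ π P t⁻¹ none *
                ((L.map fun x => prQ π P x.1 x.2).prod * star (π t)))) := by
              rw [hQtt]
          _ = π t * (prQ π P x.1 x.2 * ((prQ π P t⁻¹ none *
                (L.map fun x => prQ π P x.1 x.2).prod) * star (π t))) := by
              rw [mul_assoc]
          _ = π t * (prQ π P x.1 x.2 * (((L.map fun x => prQ π P x.1 x.2).prod *
                prQ π P t⁻¹ none) * star (π t))) := by
              rw [hcR.eq]
          _ = π t * (prQ π P x.1 x.2 * ((L.map fun x => prQ π P x.1 x.2).prod *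
                (prQ π P t⁻¹ none * star (π t)))) := by
              rw [mul_assoc]
          _ = π t * (prQ π P x.1 x.2 * ((L.map fun x => prQ π P x.1 x.2).prod *
                star (π t))) := by
              rw [h2]
          _ = π t * (prQ π P x.1 x.2 * (L.map fun x => prQ π P x.1 x.2).prod) * star (π t) := by
              simp only [mul_assoc]
      rw [← key, hconj x.1 x.2, ih]
      calc (prE π t * prQ π P (t * x.1) x.2) *
            (prE π t * (L.map fun x => prQ π P (t * x.1) x.2).prod)
          = prE π t * ((prQ π P (t * x.1) x.2 * prE π t) *
              (L.map fun x => prQ π P (t * x.1) x.2).prod) := by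
            simp only [mul_assoc]
        _ = prE π t * ((prE π t * prQ π P (t * x.1) x.2) *
              (L.map fun x => prQ π P (t * x.1) x.2).prod) := by
            rw [← (hEQcomm (t * x.1) x.2).eq]
        _ = (prE π t * prE π t) * (prQ π P (t * x.1) x.2 *
              (L.map fun x => prQ π P (t * x.1) x.2).prod) := by
            simp only [mul_assoc]
        _ = prE π t * (prQ π P (t * x.1) x.2 *
              (L.map fun x => prQ π P (t * x.1) x.2).prod) := by
            rw [hE_idem]
  -- ## The covariance identity on monomials
  have claim_mono : ∀ L : List (G × Option J),
      φ (chiG ((t : G), (none : Option J)) *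
          ((chiG ((t⁻¹ : G), (none : Option J)) * (L.map chiG).prod).comp (thetaC t)))
        = π t * φ (chiG ((t⁻¹ : G), (none : Option J)) * (L.map chiG).prod) * star (π t) := by
    intro L
    rw [key_fn t L]
    have hmap1 : ((L.map fun x => chiG (t * x.1, x.2)).map φ)
        = L.map fun x => prQ π P (t * x.1) x.2 := by
      rw [List.map_map]
      exact List.map_congr_left fun x _ => hφQ (t * x.1) x.2
    have hmap2 : ((L.map chiG).map φ) = L.map fun x => prQ π P x.1 x.2 := by
      rw [List.map_map]
      exact List.map_congr_left fun x _ => hφQ x.1 x.2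
    rw [map_mul, map_mul, map_list_prod, map_list_prod, hmap1, hmap2,
      hφQ t none, hφQ t⁻¹ none, hQ_none, ← mul_assoc, hπt, hprod]
  -- ## Continuity and density
  have hφc : Continuous φ := by
    have hb : ∀ a : C(XG G J, ℂ), ‖φ a‖ ≤ 1 * ‖a‖ := by
      intro a
      rw [one_mul]
      exact NonUnitalStarAlgHom.norm_apply_le φ a
    exact AddMonoidHomClass.continuous_of_bound φ 1 hb
  have hS : ∀ h : C(XG G J, ℂ),
      φ (chiG ((t : G), (none : Option J)) *
          ((chiG ((t⁻¹ : G), (none : Option J)) * h).comp (thetaC t)))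
        = π t * φ (chiG ((t⁻¹ : G), (none : Option J)) * h) * star (π t) := by
    have hcont1 : Continuous fun h : C(XG G J, ℂ) =>
        φ (chiG ((t : G), (none : Option J)) *
          ((chiG ((t⁻¹ : G), (none : Option J)) * h).comp (thetaC t))) := by
      apply hφc.comp
      exact continuous_const.mul
        ((ContinuousMap.continuous_precomp (thetaC t)).comp
          (continuous_const.mul continuous_id))
    have hcont2 : Continuous fun h : C(XG G J, ℂ) =>
        π t * φ (chiG ((t⁻¹ : G), (none : Option J)) * h) * star (π t) := by
      exact (continuous_const.mul (hφc.comp (continuous_const.mul continuous_id))).mul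
        continuous_const
    have hclosed : IsClosed {h : C(XG G J, ℂ) |
        φ (chiG ((t : G), (none : Option J)) *
          ((chiG ((t⁻¹ : G), (none : Option J)) * h).comp (thetaC t)))
        = π t * φ (chiG ((t⁻¹ : G), (none : Option J)) * h) * star (π t)} :=
      isClosed_eq hcont1 hcont2
    have hsstar : (Set.range (chiG : G × Option J → C(XG G J, ℂ))) ∪
        star (Set.range (chiG : G × Option J → C(XG G J, ℂ)))
        = Set.range (chiG : G × Option J → C(XG G J, ℂ)) := by
      rw [Set.union_eq_left]
      intro y hy
      rw [Set.mem_star] at hy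
      obtain ⟨x, hx⟩ := hy
      exact ⟨x, by rw [← star_chiG x, hx, star_star]⟩
    have hlist : ∀ l : List C(XG G J, ℂ),
        (∀ y ∈ l, y ∈ Set.range (chiG : G × Option J → C(XG G J, ℂ))) →
        ∃ L : List (G × Option J), l = L.map chiG := by
      intro l
      induction l with
      | nil => exact fun _ => ⟨[], rfl⟩
      | cons a l ih =>
        intro h
        obtain ⟨L, hL⟩ := ih fun y hy => h y (List.mem_cons_of_mem _ hy)
        obtain ⟨x, hx⟩ := h a List.mem_cons_self
        exact ⟨x :: L, by rw [List.map_cons, hL, hx]⟩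
    have hsub : (StarAlgebra.adjoin ℂ
        (Set.range (chiG : G × Option J → C(XG G J, ℂ))) : Set C(XG G J, ℂ)) ⊆
        {h : C(XG G J, ℂ) |
          φ (chiG ((t : G), (none : Option J)) *
            ((chiG ((t⁻¹ : G), (none : Option J)) * h).comp (thetaC t)))
          = π t * φ (chiG ((t⁻¹ : G), (none : Option J)) * h) * star (π t)} := by
      intro h hh
      rw [SetLike.mem_coe, ← StarSubalgebra.mem_toSubalgebra,
        ← Subalgebra.mem_toSubmodule, StarAlgebra.adjoin_eq_span, hsstar] at hh
      induction hh using Submodule.span_induction with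
      | mem x hx =>
        obtain ⟨l, hl, rfl⟩ := Submonoid.exists_list_of_mem_closure hx
        obtain ⟨L, rfl⟩ := hlist l hl
        exact claim_mono L
      | zero =>
        simp only [Set.mem_setOf_eq, mul_zero, ContinuousMap.zero_comp, map_zero, zero_mul]
      | add x y hx hy ihx ihy =>
        simp only [Set.mem_setOf_eq, mul_add, ContinuousMap.add_comp, map_add] at ihx ihy ⊢
        rw [ihx, ihy]
        simp only [mul_add, add_mul]
      | smul c x hx ih =>
        simp only [Set.mem_setOf_eq, mul_smul_comm, ContinuousMap.smul_comp, map_smul]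
          at ih ⊢
        rw [ih]
        simp only [mul_smul_comm, smul_mul_assoc]
    have hsep : (StarAlgebra.adjoin ℂ
        (Set.range (chiG : G × Option J → C(XG G J, ℂ)))).SeparatesPoints := by
      intro ξ η hne
      have hfn : (ξ : (G × Option J) → Bool) ≠ (η : (G × Option J) → Bool) :=
        fun hc => hne (Subtype.ext hc)
      obtain ⟨x, hx⟩ : ∃ x, (ξ : (G × Option J) → Bool) x ≠ (η : (G × Option J) → Bool) x := by
        by_contra hc
        push_neg at hc
        exact hfn (funext hc)
      refine ⟨_, ⟨chiG x, StarAlgebra.subset_adjoin ℂ _ ⟨x, rfl⟩, rfl⟩, ?_⟩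
      show chiG x ξ ≠ chiG x η
      rw [chiG_apply, chiG_apply]
      rcases Bool.eq_false_or_eq_true ((ξ : (G × Option J) → Bool) x) with h1 | h1 <;>
        rcases Bool.eq_false_or_eq_true ((η : (G × Option J) → Bool) x) with h2 | h2 <;>
        simp [h1, h2] at hx ⊢
    have hdense := ContinuousMap.starSubalgebra_topologicalClosure_eq_top_of_separatesPoints
      (StarAlgebra.adjoin ℂ (Set.range (chiG : G × Option J → C(XG G J, ℂ)))) hsep
    intro h
    have hmem : h ∈ closure (StarAlgebra.adjoin ℂ
        (Set.range (chiG : G × Option J → C(XG G J, ℂ))) : Set C(XG G J, ℂ)) := by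
      rw [← StarSubalgebra.topologicalClosure_coe, hdense]
      exact Set.mem_univ h
    exact closure_minimal hsub hclosed hmem
  -- ## Conclusion
  have hf' : chiG ((t⁻¹ : G), (none : Option J)) * f = f := by
    ext ξ
    rw [ContinuousMap.mul_apply, chiG_apply]
    by_cases h : (ξ : (G × Option J) → Bool) (t⁻¹, none) = true
    · rw [if_pos h, one_mul]
    · rw [if_neg h, zero_mul, hf ξ (Bool.eq_false_iff.mpr h)]
  have hg' : g = chiG ((t : G), (none : Option J)) *
      ((chiG ((t⁻¹ : G), (none : Option J)) * f).comp (thetaC t)) := by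
    apply ContinuousMap.coe_injective
    rw [hg, alphaMap_eq, hf']
  have h := hS f
  rw [hf'] at h
  rw [hg']
  rw [hf']
  exact h
end

section
/- For all elements c, d of the multiplicative semigroup I generated by { S_a : a ∈ E¹ } ∪ { S_a* : a ∈ E¹ }, the elements c c* and d d* commute. -/
section CK

variable {V E : Type*} {r s : E → V} {A : Type*} [CStarAlgebra A]
  {Q : V → A} {S : E → A}

/-- Product of `S` along a list of edges. -/
private def SP (S : E → A) (l : List E) : A := (l.map S).prod

private lemma SP_nil : SP S ([] : List E) = 1 := rfl

private lemma SP_cons (a : E) (l : List E) : SP S (a :: l) = S a * SP S l := by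
  simp [SP]

private lemma SP_append (l m : List E) : SP S (l ++ m) = SP S l * SP S m := by
  simp [SP]

/-- `h` is `1` or one of the projections `Q w`. -/
private def H (Q : V → A) (h : A) : Prop := h = 1 ∨ ∃ w, h = Q w

private lemma H_one : H Q (1 : A) := Or.inl rfl

private lemma H_star (hQsa : ∀ v, star (Q v) = Q v) {h : A} (hh : H Q h) :
    star h = h := by
  rcases hh with rfl | ⟨w, rfl⟩
  · exact star_one A
  · exact hQsa w

private lemma H_mul (hQproj : ∀ v, Q v * Q v = Q v)
    (hQorth : ∀ v w, v ≠ w → Q v * Q w = 0)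
    {h h' : A} (hh : H Q h) (hh' : H Q h') :
    h * h' = 0 ∨ H Q (h * h') := by
  rcases hh with rfl | ⟨w, rfl⟩
  · right; rwa [one_mul]
  · rcases hh' with rfl | ⟨w', rfl⟩
    · right; rw [mul_one]; exact Or.inr ⟨w, rfl⟩
    · by_cases hww : w = w'
      · subst hww; right; rw [hQproj]; exact Or.inr ⟨w, rfl⟩
      · left; exact hQorth _ _ hww

private lemma Q_mul_S (hQorth : ∀ v w, v ≠ w → Q v * Q w = 0)
    (hQS : ∀ a, Q (r a) * S a = S a) (v : V) (a : E) (hv : v ≠ r a) :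
    Q v * S a = 0 := by
  rw [← hQS a, ← mul_assoc, hQorth v (r a) hv, zero_mul]

private lemma S_mul_Q (hQsa : ∀ v, star (Q v) = Q v)
    (hQproj : ∀ v, Q v * Q v = Q v)
    (hSQ : ∀ a, star (S a) * S a = Q (s a)) (a : E) :
    S a * Q (s a) = S a := by
  have h0 : star (S a * Q (s a) - S a) * (S a * Q (s a) - S a) = 0 := by
    have e : star (S a * Q (s a) - S a) * (S a * Q (s a) - S a)
        = Q (s a) * (star (S a) * S a) * Q (s a) - Q (s a) * (star (S a) * S a)
          - star (S a) * S a * Q (s a) + star (S a) * S a := by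
      simp only [star_sub, star_mul, hQsa]
      noncomm_ring
    rw [e, hSQ a]
    simp only [hQproj]
    abel
  exact sub_eq_zero.mp ((CStarRing.star_mul_self_eq_zero_iff _).mp h0)

private lemma S_mul_Q' (hQsa : ∀ v, star (Q v) = Q v)
    (hQproj : ∀ v, Q v * Q v = Q v)
    (hQorth : ∀ v w, v ≠ w → Q v * Q w = 0)
    (hSQ : ∀ a, star (S a) * S a = Q (s a)) (a : E) (v : V) (hv : s a ≠ v) :
    S a * Q v = 0 := by
  rw [← S_mul_Q hQsa hQproj hSQ a, mul_assoc, hQorth _ _ hv, mul_zero]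

/-- Left absorption: `h * SP (a :: l)` is `SP (a :: l)` or `0`. -/
private lemma H_mul_SP (hQorth : ∀ v w, v ≠ w → Q v * Q w = 0)
    (hQS : ∀ a, Q (r a) * S a = S a)
    {h : A} (hh : H Q h) (a : E) (l : List E) :
    h * SP S (a :: l) = SP S (a :: l) ∨ h * SP S (a :: l) = 0 := by
  rcases hh with rfl | ⟨w, rfl⟩
  · left; rw [one_mul]
  · rw [SP_cons, ← mul_assoc]
    by_cases hw : w = r a
    · subst hw; left; rw [hQS]
    · right; rw [Q_mul_S hQorth hQS _ _ hw, zero_mul]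

/-- Right absorption: `SP l * h` is `SP l` or `0` for nonempty `l`. -/
private lemma SP_mul_H (hQsa : ∀ v, star (Q v) = Q v)
    (hQproj : ∀ v, Q v * Q v = Q v)
    (hQorth : ∀ v w, v ≠ w → Q v * Q w = 0)
    (hSQ : ∀ a, star (S a) * S a = Q (s a))
    {h : A} (hh : H Q h) :
    ∀ l : List E, l ≠ [] → (SP S l * h = SP S l ∨ SP S l * h = 0) := by
  intro l
  induction l with
  | nil => intro hc; exact absurd rfl hc
  | cons a l ih =>
    intro _
    rcases eq_or_ne l [] with rfl | hl
    · rcases hh with rfl | ⟨w, rfl⟩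
      · left; rw [mul_one]
      · simp only [SP_cons, SP_nil, mul_one]
        by_cases hw : s a = w
        · subst hw; left; exact S_mul_Q hQsa hQproj hSQ a
        · right; exact S_mul_Q' hQsa hQproj hQorth hSQ a w hw
    · rcases ih hl with h1 | h1
      · left; rw [SP_cons, mul_assoc, h1]
      · right; rw [SP_cons, mul_assoc, h1, mul_zero]

/-- The key structural lemma: `star (SP μ) * SP ν` is zero, or `ν` extends `μ`
and the product is `h * SP τ`, or `μ` extends `ν` and it is `star (SP τ) * h`. -/
private lemma key (hQorth : ∀ v w, v ≠ w → Q v * Q w = 0)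
    (hSorth : ∀ a b : E, a ≠ b → star (S a) * S b = 0)
    (hSQ : ∀ a, star (S a) * S a = Q (s a))
    (hQS : ∀ a, Q (r a) * S a = S a) :
    ∀ μ ν : List E,
      star (SP S μ) * SP S ν = 0 ∨
      (∃ τ h, H Q h ∧ ν = μ ++ τ ∧ star (SP S μ) * SP S ν = h * SP S τ) ∨
      (∃ τ h, H Q h ∧ μ = ν ++ τ ∧ star (SP S μ) * SP S ν = star (SP S τ) * h) := by
  intro μ
  induction μ with
  | nil =>
    intro ν
    right; left
    exact ⟨ν, 1, H_one, rfl, by simp [SP_nil]⟩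
  | cons a μ ih =>
    intro ν
    match ν with
    | [] =>
      right; right
      exact ⟨a :: μ, 1, H_one, rfl, by simp [SP_nil]⟩
    | b :: ν =>
      have hsplit : star (SP S (a :: μ)) * SP S (b :: ν)
          = star (SP S μ) * (star (S a) * S b) * SP S ν := by
        rw [SP_cons, SP_cons, star_mul]
        noncomm_ring
      by_cases hab : a = b
      · subst hab
        rw [hSQ] at hsplit
        -- now star (SP μ) * Q (s a) * SP ν
        match ν with
        | [] =>
          right; right
          refine ⟨μ, Q (s a), Or.inr ⟨_, rfl⟩, rfl, ?_⟩
          rw [hsplit, SP_nil, mul_one]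
        | c :: ν =>
          by_cases hc : s a = r c
          · have habs : Q (s a) * SP S (c :: ν) = SP S (c :: ν) := by
              rw [SP_cons, ← mul_assoc, hc, hQS]
            have hred : star (SP S (a :: μ)) * SP S (a :: c :: ν)
                = star (SP S μ) * SP S (c :: ν) := by
              rw [hsplit, mul_assoc, habs]
            rcases ih (c :: ν) with h0 | ⟨τ, h, hh, hτ, heq⟩ | ⟨τ, h, hh, hτ, heq⟩
            · left; rw [hred, h0]
            · right; left
              exact ⟨τ, h, hh, by rw [hτ]; rfl, by rw [hred, heq]⟩
            · right; right
              exact ⟨τ, h, hh, by rw [hτ]; rfl, by rw [hred, heq]⟩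
          · left
            rw [hsplit, mul_assoc, SP_cons, ← mul_assoc (Q (s a)),
              Q_mul_S hQorth hQS _ _ hc, zero_mul, mul_zero]
      · left
        rw [hsplit, hSorth a b hab, mul_zero, zero_mul]
private lemma H_comm_star (hQsa : ∀ v, star (Q v) = Q v)
    (hQorth : ∀ v w, v ≠ w → Q v * Q w = 0)
    {h h' : A} (hh : H Q h) (hh' : H Q h') : star (h * h') = h * h' := by
  have hcomm : h * h' = h' * h := by
    rcases hh with rfl | ⟨w, rfl⟩
    · rw [one_mul, mul_one]
    · rcases hh' with rfl | ⟨w', rfl⟩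
      · rw [one_mul, mul_one]
      · by_cases hww : w = w'
        · subst hww; rfl
        · rw [hQorth _ _ hww, hQorth _ _ (Ne.symm hww)]
  rw [star_mul, H_star hQsa hh, H_star hQsa hh', ← hcomm]

private lemma star_sandwich (hQsa : ∀ v, star (Q v) = Q v)
    {h : A} (hh : H Q h) (l : List E) :
    star (SP S l * h * star (SP S l)) = SP S l * h * star (SP S l) := by
  simp only [star_mul, star_star, H_star hQsa hh, mul_assoc]

/-- Every product in normal form stays in normal form. -/
private lemma NF_mul (hQsa : ∀ v, star (Q v) = Q v)
    (hQproj : ∀ v, Q v * Q v = Q v)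
    (hQorth : ∀ v w, v ≠ w → Q v * Q w = 0)
    (hSorth : ∀ a b : E, a ≠ b → star (S a) * S b = 0)
    (hSQ : ∀ a, star (S a) * S a = Q (s a))
    (hQS : ∀ a, Q (r a) * S a = S a)
    {c d : A}
    (hc : c = 0 ∨ ∃ μ ν h, H Q h ∧ c = SP S μ * h * star (SP S ν))
    (hd : d = 0 ∨ ∃ μ ν h, H Q h ∧ d = SP S μ * h * star (SP S ν)) :
    c * d = 0 ∨ ∃ μ ν h, H Q h ∧ c * d = SP S μ * h * star (SP S ν) := by
  rcases hc with rfl | ⟨μ, ν, h, hh, rfl⟩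
  · left; rw [zero_mul]
  rcases hd with rfl | ⟨μ', ν', h', hh', rfl⟩
  · left; rw [mul_zero]
  rcases key hQorth hSorth hSQ hQS ν μ' with h0 | ⟨τ, h₂, hh₂, hτ, heq⟩ | ⟨τ, h₂, hh₂, hτ, heq⟩
  · left
    have e : (SP S μ * h * star (SP S ν)) * (SP S μ' * h' * star (SP S ν'))
        = SP S μ * h * (star (SP S ν) * SP S μ') * (h' * star (SP S ν')) := by
      noncomm_ring
    rw [e, h0, mul_zero, zero_mul]
  · -- μ' = ν ++ τ
    subst hτ
    have e1 : (SP S μ * h * star (SP S ν)) * (SP S (ν ++ τ) * h' * star (SP S ν'))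
        = SP S μ * ((h * h₂) * (SP S τ * (h' * star (SP S ν')))) := by
      have e0 : (SP S μ * h * star (SP S ν)) * (SP S (ν ++ τ) * h' * star (SP S ν'))
          = SP S μ * (h * ((star (SP S ν) * SP S (ν ++ τ)) * (h' * star (SP S ν')))) := by
        noncomm_ring
      rw [e0, heq]; noncomm_ring
    rcases H_mul hQproj hQorth hh hh₂ with h3 | hh3
    · left; rw [e1, h3, zero_mul, mul_zero]
    · match τ, e1 with
      | [], e1 =>
        have e2 : SP S μ * ((h * h₂) * (SP S ([] : List E) * (h' * star (SP S ν'))))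
            = SP S μ * ((h * h₂) * h') * star (SP S ν') := by
          rw [SP_nil]; noncomm_ring
        rcases H_mul hQproj hQorth hh3 hh' with h4 | hh4
        · left; rw [e1, e2, h4, mul_zero, zero_mul]
        · right; exact ⟨μ, ν', (h * h₂) * h', hh4, by rw [e1, e2]⟩
      | a :: τ, e1 =>
        rcases H_mul_SP hQorth hQS hh3 a τ with habs | habs
        · right
          refine ⟨μ ++ (a :: τ), ν', h', hh', ?_⟩
          have e3 : (h * h₂) * (SP S (a :: τ) * (h' * star (SP S ν')))
              = ((h * h₂) * SP S (a :: τ)) * (h' * star (SP S ν')) := by noncomm_ring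
          rw [e1, e3, habs, SP_append]; noncomm_ring
        · left
          have e3 : (h * h₂) * (SP S (a :: τ) * (h' * star (SP S ν')))
              = ((h * h₂) * SP S (a :: τ)) * (h' * star (SP S ν')) := by noncomm_ring
          rw [e1, e3, habs, zero_mul, mul_zero]
  · -- ν = μ' ++ τ
    subst hτ
    have e1 : (SP S μ * h * star (SP S (μ' ++ τ))) * (SP S μ' * h' * star (SP S ν'))
        = SP S μ * (h * (star (SP S τ) * ((h₂ * h') * star (SP S ν')))) := by
      have e0 : (SP S μ * h * star (SP S (μ' ++ τ))) * (SP S μ' * h' * star (SP S ν'))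
          = SP S μ * (h * ((star (SP S (μ' ++ τ)) * SP S μ') * (h' * star (SP S ν')))) := by
        noncomm_ring
      rw [e0, heq]; noncomm_ring
    rcases H_mul hQproj hQorth hh₂ hh' with h4 | hh4
    · left; rw [e1, h4, zero_mul, mul_zero, mul_zero, mul_zero]
    · match τ, e1 with
      | [], e1 =>
        have e2 : SP S μ * (h * (star (SP S ([] : List E)) * ((h₂ * h') * star (SP S ν'))))
            = SP S μ * (h * (h₂ * h')) * star (SP S ν') := by
          rw [SP_nil, star_one]; noncomm_ring
        rcases H_mul hQproj hQorth hh hh4 with h5 | hh5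
        · left; rw [e1, e2, h5, mul_zero, zero_mul]
        · right; exact ⟨μ, ν', h * (h₂ * h'), hh5, by rw [e1, e2]⟩
      | a :: τ, e1 =>
        have hkey : star (SP S (a :: τ)) * (h₂ * h')
            = star ((h₂ * h') * SP S (a :: τ)) := by
          rw [star_mul, H_comm_star hQsa hQorth hh₂ hh']
        have e3 : SP S μ * (h * (star (SP S (a :: τ)) * ((h₂ * h') * star (SP S ν'))))
            = SP S μ * (h * ((star (SP S (a :: τ)) * (h₂ * h')) * star (SP S ν'))) := by
          noncomm_ring
        rcases H_mul_SP hQorth hQS hh4 a τ with habs | habs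
        · right
          refine ⟨μ, ν' ++ (a :: τ), h, hh, ?_⟩
          rw [e1, e3, hkey, habs, SP_append, star_mul]
          noncomm_ring
        · left
          rw [e1, e3, hkey, habs, star_zero, zero_mul, mul_zero, mul_zero]
/-- The range "projection" `c * star c` of a normal form element. -/
private lemma NF_mul_star (hQsa : ∀ v, star (Q v) = Q v)
    (hQproj : ∀ v, Q v * Q v = Q v)
    (hQorth : ∀ v w, v ≠ w → Q v * Q w = 0)
    (hSorth : ∀ a b : E, a ≠ b → star (S a) * S b = 0)
    (hSQ : ∀ a, star (S a) * S a = Q (s a))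
    (hQS : ∀ a, Q (r a) * S a = S a)
    {c : A} (hc : c = 0 ∨ ∃ μ ν h, H Q h ∧ c = SP S μ * h * star (SP S ν)) :
    c * star c = 0 ∨ ∃ μ h, H Q h ∧ c * star c = SP S μ * h * star (SP S μ) := by
  rcases hc with rfl | ⟨μ, ν, h, hh, rfl⟩
  · left; rw [zero_mul]
  have hmid : star (SP S ν) * SP S ν = 0 ∨
      ∃ h₂, H Q h₂ ∧ star (SP S ν) * SP S ν = h₂ := by
    rcases key hQorth hSorth hSQ hQS ν ν with h0 | ⟨τ, h₂, hh₂, hτ, heq⟩ |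
      ⟨τ, h₂, hh₂, hτ, heq⟩
    · exact Or.inl h0
    · have hτ0 : τ = [] := by simpa using hτ
      subst hτ0
      right; exact ⟨h₂, hh₂, by rw [heq, SP_nil, mul_one]⟩
    · have hτ0 : τ = [] := by simpa using hτ
      subst hτ0
      right; exact ⟨h₂, hh₂, by rw [heq, SP_nil, star_one, one_mul]⟩
  have e : (SP S μ * h * star (SP S ν)) * star (SP S μ * h * star (SP S ν))
      = SP S μ * (h * ((star (SP S ν) * SP S ν) * (h * star (SP S μ)))) := by
    simp only [star_mul, star_star, H_star hQsa hh]
    noncomm_ring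
  rcases hmid with h0 | ⟨h₂, hh₂, hmid⟩
  · left; rw [e, h0, zero_mul, mul_zero, mul_zero]
  · have e' : (SP S μ * h * star (SP S ν)) * star (SP S μ * h * star (SP S ν))
        = SP S μ * ((h * h₂) * h) * star (SP S μ) := by
      rw [e, hmid]; noncomm_ring
    rcases H_mul hQproj hQorth hh hh₂ with h3 | hh3
    · left; rw [e', h3, zero_mul, mul_zero, zero_mul]
    · rcases H_mul hQproj hQorth hh3 hh with h4 | hh4
      · left; rw [e', h4, mul_zero, zero_mul]
      · right; exact ⟨μ, (h * h₂) * h, hh4, e'⟩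

/-- If `μ'` extends `μ` (or the products are orthogonal), the product of the two
sandwich elements is self-adjoint. -/
private lemma half (hQsa : ∀ v, star (Q v) = Q v)
    (hQproj : ∀ v, Q v * Q v = Q v)
    (hQorth : ∀ v w, v ≠ w → Q v * Q w = 0)
    (hQS : ∀ a, Q (r a) * S a = S a)
    {μ μ' : List E} {h h' : A} (hh : H Q h) (hh' : H Q h')
    (hcase : star (SP S μ) * SP S μ' = 0 ∨
      ∃ τ h₂, H Q h₂ ∧ μ' = μ ++ τ ∧ star (SP S μ) * SP S μ' = h₂ * SP S τ) :
    star ((SP S μ * h * star (SP S μ)) * (SP S μ' * h' * star (SP S μ')))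
      = (SP S μ * h * star (SP S μ)) * (SP S μ' * h' * star (SP S μ')) := by
  rcases hcase with h0 | ⟨τ, h₂, hh₂, hτ, heq⟩
  · have e : (SP S μ * h * star (SP S μ)) * (SP S μ' * h' * star (SP S μ'))
        = SP S μ * h * (star (SP S μ) * SP S μ') * (h' * star (SP S μ')) := by
      noncomm_ring
    rw [e, h0, mul_zero, zero_mul, star_zero]
  subst hτ
  have e1 : (SP S μ * h * star (SP S μ)) * (SP S (μ ++ τ) * h' * star (SP S (μ ++ τ)))
      = SP S μ * ((h * h₂) * (SP S τ * (h' * (star (SP S τ) * star (SP S μ))))) := by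
    have e0 : (SP S μ * h * star (SP S μ)) * (SP S (μ ++ τ) * h' * star (SP S (μ ++ τ)))
        = SP S μ * (h * ((star (SP S μ) * SP S (μ ++ τ)) * (h' * star (SP S (μ ++ τ))))) := by
      noncomm_ring
    rw [e0, heq, SP_append, star_mul]; noncomm_ring
  rcases H_mul hQproj hQorth hh hh₂ with h3 | hh3
  · rw [e1, h3, zero_mul, mul_zero, star_zero]
  match τ, e1 with
  | [], e1 =>
    have e2 : SP S μ * ((h * h₂) *
          (SP S ([] : List E) * (h' * (star (SP S ([] : List E)) * star (SP S μ)))))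
        = SP S μ * ((h * h₂) * h') * star (SP S μ) := by
      rw [SP_nil, star_one]; noncomm_ring
    rcases H_mul hQproj hQorth hh3 hh' with h4 | hh4
    · rw [e1, e2, h4, mul_zero, zero_mul, star_zero]
    · rw [e1, e2]; exact star_sandwich hQsa hh4 μ
  | a :: τ, e1 =>
    have e3 : (h * h₂) * (SP S (a :: τ) * (h' * (star (SP S (a :: τ)) * star (SP S μ))))
        = ((h * h₂) * SP S (a :: τ)) * (h' * (star (SP S (a :: τ)) * star (SP S μ))) := by
      noncomm_ring
    rcases H_mul_SP hQorth hQS hh3 a τ with habs | habs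
    · have e4 : SP S μ * (SP S (a :: τ) * (h' * (star (SP S (a :: τ)) * star (SP S μ))))
          = SP S (μ ++ a :: τ) * h' * star (SP S (μ ++ a :: τ)) := by
        rw [SP_append, star_mul]; noncomm_ring
      rw [e1, e3, habs, e4]
      exact star_sandwich hQsa hh' _
    · rw [e1, e3, habs, zero_mul, mul_zero, star_zero]

end CK

/-- Let `E = (E⁰, E¹, r, s)` be a directed graph and let `{Q_v}, {S_a}` be a
Cuntz–Krieger `E`-family in a C*-algebra `A`: the `Q_v` are mutually orthogonal
projections, `S_a* S_b = 0` for `a ≠ b`, `S_a* S_a = Q_{s(a)}`, and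
`S_a S_a* ≤ Q_{r(a)}` (equivalently `Q_{r(a)} S_a = S_a`).  Then for all elements
`c, d` of the multiplicative semigroup generated by `{ S_a } ∪ { S_a* }`, the
elements `c c*` and `d d*` commute. -/
theorem mem_semigroup_range_projections_commute
    (V E : Type*) (r s : E → V) (A : Type*) [CStarAlgebra A]
    (Q : V → A) (S : E → A)
    (hQsa : ∀ v : V, star (Q v) = Q v)
    (hQproj : ∀ v : V, Q v * Q v = Q v)
    (hQorth : ∀ v w : V, v ≠ w → Q v * Q w = 0)
    (hSorth : ∀ a b : E, a ≠ b → star (S a) * S b = 0)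
    (hSQ : ∀ a : E, star (S a) * S a = Q (s a))
    (hQS : ∀ a : E, Q (r a) * S a = S a) :
    ∀ c ∈ Subsemigroup.closure {x : A | ∃ a : E, x = S a ∨ x = star (S a)},
      ∀ d ∈ Subsemigroup.closure {x : A | ∃ a : E, x = S a ∨ x = star (S a)},
        Commute (c * star c) (d * star d) := by
  have hNF : ∀ c ∈ Subsemigroup.closure {x : A | ∃ a : E, x = S a ∨ x = star (S a)},
      c = 0 ∨ ∃ μ ν h, H Q h ∧ c = SP S μ * h * star (SP S ν) := by
    intro c hc
    induction hc using Subsemigroup.closure_induction with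
    | mem x hx =>
      obtain ⟨a, rfl | rfl⟩ := hx
      · exact Or.inr ⟨[a], [], 1, H_one, by simp [SP_cons, SP_nil]⟩
      · exact Or.inr ⟨[], [a], 1, H_one, by simp [SP_cons, SP_nil]⟩
    | mul x y hx hy px py => exact NF_mul hQsa hQproj hQorth hSorth hSQ hQS px py
  intro c hc d hd
  rcases NF_mul_star hQsa hQproj hQorth hSorth hSQ hQS (hNF c hc) with h0 | ⟨μ, h, hh, hP⟩
  · rw [h0]; exact Commute.zero_left _
  rcases NF_mul_star hQsa hQproj hQorth hSorth hSQ hQS (hNF d hd) with h0 | ⟨μ', h', hh', hP'⟩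
  · rw [h0]; exact Commute.zero_right _
  rw [hP, hP']
  have hPs := star_sandwich (S := S) hQsa hh μ
  have hP's := star_sandwich (S := S) hQsa hh' μ'
  rcases key hQorth hSorth hSQ hQS μ μ' with h0 | ⟨τ, h₂, hh₂, hτ, heq⟩ | ⟨τ, h₂, hh₂, hτ, heq⟩
  · have hsa := half hQsa hQproj hQorth hQS hh hh' (Or.inl h0)
    refine (commute_iff_eq _ _).mpr ?_
    conv_rhs => rw [← hP's, ← hPs]
    rw [← star_mul, hsa]
  · have hsa := half hQsa hQproj hQorth hQS hh hh' (Or.inr ⟨τ, h₂, hh₂, hτ, heq⟩)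
    refine (commute_iff_eq _ _).mpr ?_
    conv_rhs => rw [← hP's, ← hPs]
    rw [← star_mul, hsa]
  · have heq' : star (SP S μ') * SP S μ = h₂ * SP S τ := by
      calc star (SP S μ') * SP S μ = star (star (SP S μ) * SP S μ') := by
            rw [star_mul, star_star]
        _ = star (star (SP S τ) * h₂) := by rw [heq]
        _ = h₂ * SP S τ := by rw [star_mul, star_star, H_star hQsa hh₂]
    have hsa := half hQsa hQproj hQorth hQS hh' hh (Or.inr ⟨τ, h₂, hh₂, hτ, heq'⟩)
    refine (commute_iff_eq _ _).mpr ?_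
    conv_lhs => rw [← hPs, ← hP's]
    rw [← star_mul, hsa]
end

section
/- For every a ∈ E¹ and every element d of the multiplicative semigroup I generated by { S_a : a ∈ E¹ } ∪ { S_a* : a ∈ E¹ }, both S_a S_a* and S_a* S_a commute with d d*. -/
namespace CKAux

variable {V E : Type*} {A : Type*} [CStarAlgebra A]

structure Hyp (r s : E → V) (Q : V → A) (S : E → A) : Prop where
  hQsa : ∀ v, star (Q v) = Q v
  hQproj : ∀ v, Q v * Q v = Q v
  hQorth : ∀ v w, v ≠ w → Q v * Q w = 0
  hSorth : ∀ a b, a ≠ b → star (S a) * S b = 0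
  hSQ : ∀ a, star (S a) * S a = Q (s a)
  hQS : ∀ a, Q (r a) * S a = S a

variable {r s : E → V} {Q : V → A} {S : E → A}

def SP (S : E → A) (l : List E) : A := (l.map S).prod

@[simp] lemma SP_nil : SP S ([] : List E) = 1 := rfl
@[simp] lemma SP_cons (a : E) (l : List E) : SP S (a :: l) = S a * SP S l := by
  simp [SP]
lemma SP_append (l₁ l₂ : List E) : SP S (l₁ ++ l₂) = SP S l₁ * SP S l₂ := by
  simp [SP]

lemma Hyp.eq_zero (_ : Hyp r s Q S) {t : A} (ht : star t * t = 0) : t = 0 :=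
  (CStarRing.star_mul_self_eq_zero_iff t).mp ht

lemma Hyp.SQs (h : Hyp r s Q S) (a : E) : S a * Q (s a) = S a := by
  have key : star (S a * Q (s a) - S a) * (S a * Q (s a) - S a) = 0 := by
    have e : star (S a * Q (s a) - S a) * (S a * Q (s a) - S a)
        = Q (s a) * ((star (S a) * S a) * Q (s a)) - Q (s a) * (star (S a) * S a)
          - (star (S a) * S a) * Q (s a) + star (S a) * S a := by
      rw [star_sub, star_mul, h.hQsa]; noncomm_ring
    rw [e, h.hSQ, h.hQproj, h.hQproj]
    noncomm_ring
  have := h.eq_zero key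
  linear_combination (norm := noncomm_ring) this

lemma Hyp.QS_ne (h : Hyp r s Q S) {w : V} {a : E} (hw : w ≠ r a) : Q w * S a = 0 := by
  rw [← h.hQS a, ← mul_assoc, h.hQorth _ _ hw, zero_mul]

lemma Hyp.SQ_ne (h : Hyp r s Q S) {a : E} {w : V} (hw : w ≠ s a) : S a * Q w = 0 := by
  rw [← h.SQs a, mul_assoc, h.hQorth _ _ (Ne.symm hw), mul_zero]

lemma Hyp.starSQ (h : Hyp r s Q S) (a : E) (w : V) :
    star (S a) * Q w = star (Q w * S a) := by
  rw [star_mul, h.hQsa]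

lemma Hyp.QstarS (h : Hyp r s Q S) (w : V) (a : E) :
    Q w * star (S a) = star (S a * Q w) := by
  rw [star_mul, h.hQsa]

lemma Hyp.QQ (h : Hyp r s Q S) (v w : V) : Q v * Q w = Q w * Q v := by
  rcases eq_or_ne v w with rfl | hne
  · rfl
  · rw [h.hQorth _ _ hne, h.hQorth _ _ hne.symm]

/-- every `Q w` commutes with `S_μ Q_v S_μ*`. -/
lemma Hyp.Qcomm (h : Hyp r s Q S) (μ : List E) (v w : V) :
    Q w * (SP S μ * Q v * star (SP S μ)) = (SP S μ * Q v * star (SP S μ)) * Q w := by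
  cases μ with
  | nil => simpa using h.QQ w v
  | cons a μ =>
    set M := SP S μ * Q v * star (SP S μ) with hM
    have lhs : Q w * (SP S (a :: μ) * Q v * star (SP S (a :: μ)))
        = (Q w * S a) * M * star (S a) := by
      simp only [SP_cons, star_mul, hM]; noncomm_ring
    have rhs : (SP S (a :: μ) * Q v * star (SP S (a :: μ))) * Q w
        = S a * M * (star (S a) * Q w) := by
      simp only [SP_cons, star_mul, hM]; noncomm_ring
    rw [lhs, rhs, h.starSQ]
    rcases eq_or_ne w (r a) with rfl | hw
    · rw [h.hQS]
    · rw [h.QS_ne hw]; simp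

/-- every `S_b S_b*` commutes with `S_μ Q_v S_μ*`. -/
lemma Hyp.Pcomm (h : Hyp r s Q S) (b : E) (μ : List E) (v : V) :
    (S b * star (S b)) * (SP S μ * Q v * star (SP S μ))
      = (SP S μ * Q v * star (SP S μ)) * (S b * star (S b)) := by
  cases μ with
  | nil =>
    simp only [SP_nil, one_mul, star_one, mul_one]
    have l : S b * star (S b) * Q v = S b * star (Q v * S b) := by
      rw [star_mul, h.hQsa, mul_assoc]
    have r' : Q v * (S b * star (S b)) = (Q v * S b) * star (S b) := by
      rw [mul_assoc]
    rw [l, r']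
    rcases eq_or_ne v (r b) with rfl | hv
    · rw [h.hQS]
    · rw [h.QS_ne hv]; simp
  | cons a μ =>
    set M := SP S μ * Q v * star (SP S μ) with hM
    have hXl : SP S (a :: μ) * Q v * star (SP S (a :: μ)) = S a * M * star (S a) := by
      simp only [SP_cons, star_mul, hM]; noncomm_ring
    rw [hXl]
    rcases eq_or_ne b a with rfl | hba
    · have hQM : Q (s b) * M = M * Q (s b) := h.Qcomm μ v (s b)
      have e1 : S b * star (S b) * (S b * M * star (S b))
          = S b * ((star (S b) * S b) * M) * star (S b) := by noncomm_ring
      have e2 : (S b * M * star (S b)) * (S b * star (S b))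
          = S b * (M * (star (S b) * S b)) * star (S b) := by noncomm_ring
      rw [e1, e2, h.hSQ, hQM]
    · have h1 : star (S b) * S a = 0 := h.hSorth b a hba
      have h2 : star (S a) * S b = 0 := h.hSorth a b (Ne.symm hba)
      have e1 : S b * star (S b) * (S a * M * star (S a))
          = S b * (star (S b) * S a) * M * star (S a) := by noncomm_ring
      have e2 : (S a * M * star (S a)) * (S b * star (S b))
          = S a * M * (star (S a) * S b) * star (S b) := by noncomm_ring
      rw [e1, e2, h1, h2]; simp

/-- `Q w` absorbs or kills `S_μ Q_v` from the left. -/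
lemma Hyp.Qhead (h : Hyp r s Q S) (μ : List E) (v w : V) :
    Q w * (SP S μ * Q v) = SP S μ * Q v ∨ Q w * (SP S μ * Q v) = 0 := by
  cases μ with
  | nil =>
    rcases eq_or_ne w v with rfl | hw
    · left; simp [h.hQproj]
    · right; simp [h.hQorth _ _ hw]
  | cons a μ =>
    have e : Q w * (SP S (a :: μ) * Q v) = (Q w * S a) * (SP S μ * Q v) := by
      simp only [SP_cons]; noncomm_ring
    rcases eq_or_ne w (r a) with rfl | hw
    · left; rw [e, h.hQS]; simp only [SP_cons]; noncomm_ring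
    · right; rw [e, h.QS_ne hw, zero_mul]

/-- normal form predicate -/
def NF (Q : V → A) (S : E → A) (d : A) : Prop :=
  d = 0 ∨ ∃ (μ ν : List E) (v : V),
    star (SP S μ * Q v) * (SP S μ * Q v) = Q v ∧
    star (SP S ν * Q v) * (SP S ν * Q v) = Q v ∧
    d = (SP S μ * Q v) * star (SP S ν * Q v)

lemma Hyp.NF_S (h : Hyp r s Q S) (a : E) : NF Q S (S a) := by
  right
  refine ⟨[a], [], s a, ?_, ?_, ?_⟩
  · have e : SP S [a] * Q (s a) = S a := by simp [h.SQs]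
    rw [e, h.hSQ]
  · simp [h.hQsa, h.hQproj]
  · have e : SP S [a] * Q (s a) = S a := by simp [h.SQs]
    rw [e]
    simp [h.hQsa, h.SQs]

lemma Hyp.NF_Sstar (h : Hyp r s Q S) (a : E) : NF Q S (star (S a)) := by
  right
  refine ⟨[], [a], s a, ?_, ?_, ?_⟩
  · simp [h.hQsa, h.hQproj]
  · have e : SP S [a] * Q (s a) = S a := by simp [h.SQs]
    rw [e, h.hSQ]
  · have e : SP S [a] * Q (s a) = S a := by simp [h.SQs]
    rw [e]
    simp only [SP_nil, one_mul]
    rw [h.QstarS, h.SQs]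

lemma Hyp.NF_mulS (h : Hyp r s Q S) (a : E) {d : A} (hd : NF Q S d) :
    NF Q S (S a * d) := by
  rcases hd with rfl | ⟨μ, ν, v, hμ, hν, rfl⟩
  · left; simp
  have hd' : S a * ((SP S μ * Q v) * star (SP S ν * Q v))
      = (SP S (a :: μ) * Q v) * star (SP S ν * Q v) := by
    simp only [SP_cons]; noncomm_ring
  have hcond : star (SP S (a :: μ) * Q v) * (SP S (a :: μ) * Q v)
      = star (SP S μ * Q v) * (Q (s a) * (SP S μ * Q v)) := by
    simp only [SP_cons, star_mul]
    rw [← h.hSQ a]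
    noncomm_ring
  rcases h.Qhead μ v (s a) with habs | hkill
  · right
    refine ⟨a :: μ, ν, v, ?_, hν, hd'⟩
    rw [hcond, habs, hμ]
  · left
    have : star (SP S (a :: μ) * Q v) * (SP S (a :: μ) * Q v) = 0 := by
      rw [hcond, hkill, mul_zero]
    rw [hd', h.eq_zero this, zero_mul]

lemma Hyp.NF_mulSstar (h : Hyp r s Q S) (a : E) {d : A} (hd : NF Q S d) :
    NF Q S (star (S a) * d) := by
  rcases hd with rfl | ⟨μ, ν, v, hμ, hν, rfl⟩
  · left; simp
  cases μ with
  | nil =>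
    simp only [SP_nil, one_mul] at hμ ⊢
    rcases eq_or_ne v (r a) with rfl | hv
    · right
      refine ⟨[], ν ++ [a], s a, ?_, ?_, ?_⟩
      · simp [h.hQsa, h.hQproj]
      · have e : SP S (ν ++ [a]) * Q (s a) = (SP S ν * Q (r a)) * S a := by
          rw [SP_append]
          simp only [SP_cons, SP_nil, mul_one]
          rw [mul_assoc, h.SQs, mul_assoc, h.hQS]
        rw [e, star_mul]
        calc star (S a) * star (SP S ν * Q (r a)) * ((SP S ν * Q (r a)) * S a)
            = star (S a) * ((star (SP S ν * Q (r a)) * (SP S ν * Q (r a))) * S a) := by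
              noncomm_ring
          _ = star (S a) * (Q (r a) * S a) := by rw [hν]
          _ = Q (s a) := by rw [h.hQS, h.hSQ]
      · have e : SP S (ν ++ [a]) * Q (s a) = (SP S ν * Q (r a)) * S a := by
          rw [SP_append]
          simp only [SP_cons, SP_nil, mul_one]
          rw [mul_assoc, h.SQs, mul_assoc, h.hQS]
        have hx : Q (r a) * star (SP S ν * Q (r a)) = star (SP S ν * Q (r a)) := by
          rw [star_mul, h.hQsa, ← mul_assoc, h.hQproj]
        have hy : Q (s a) * star (S a) = star (S a) := by rw [h.QstarS, h.SQs]
        simp only [SP_nil, one_mul]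
        rw [hx, e, star_mul (SP S ν * Q (r a)) (S a), ← mul_assoc, hy]
    · left
      rw [← mul_assoc, h.starSQ, h.QS_ne hv]
      simp
  | cons b μ' =>
    rcases eq_or_ne a b with rfl | hab
    · have e : star (S a) * ((SP S (a :: μ') * Q v) * star (SP S ν * Q v))
          = ((star (S a) * S a) * (SP S μ' * Q v)) * star (SP S ν * Q v) := by
        simp only [SP_cons]; noncomm_ring
      rw [e, h.hSQ]
      have hμ2 : star (SP S μ' * Q v) * (Q (s a) * (SP S μ' * Q v)) = Q v := by
        have e2 : star (SP S (a :: μ') * Q v) * (SP S (a :: μ') * Q v)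
            = star (SP S μ' * Q v) * ((star (S a) * S a) * (SP S μ' * Q v)) := by
          simp only [SP_cons, star_mul]; noncomm_ring
        rw [← h.hSQ a, ← e2]
        exact hμ
      rcases h.Qhead μ' v (s a) with habs | hkill
      · right
        exact ⟨μ', ν, v, by rw [habs] at hμ2; exact hμ2, hν, by rw [habs]⟩
      · left
        rw [hkill, zero_mul]
    · left
      have e : star (S a) * ((SP S (b :: μ') * Q v) * star (SP S ν * Q v))
          = (star (S a) * S b) * ((SP S μ' * Q v) * star (SP S ν * Q v)) := by
        simp only [SP_cons]; noncomm_ring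
      rw [e, h.hSorth a b hab, zero_mul]

lemma exists_list {G : Set A} {d : A} (hd : d ∈ Subsemigroup.closure G) :
    ∃ l : List A, l ≠ [] ∧ (∀ x ∈ l, x ∈ G) ∧ l.prod = d := by
  induction hd using Subsemigroup.closure_induction with
  | mem x hx => exact ⟨[x], by simp, by simpa using hx, by simp⟩
  | mul x y hx hy ihx ihy =>
    obtain ⟨l1, h1, h1G, rfl⟩ := ihx
    obtain ⟨l2, h2, h2G, rfl⟩ := ihy
    refine ⟨l1 ++ l2, by simp [h1], ?_, by simp⟩
    intro x hx
    rcases List.mem_append.mp hx with hh | hh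
    exacts [h1G x hh, h2G x hh]

lemma Hyp.NF_prod (h : Hyp r s Q S) :
    ∀ l : List A, l ≠ [] →
      (∀ x ∈ l, x ∈ {x : A | ∃ a : E, x = S a ∨ x = star (S a)}) → NF Q S l.prod := by
  intro l
  induction l with
  | nil => intro hne _; exact absurd rfl hne
  | cons g l ih =>
    intro _ hmem
    rw [List.prod_cons]
    by_cases hl : l = []
    · subst hl
      simp only [List.prod_nil, mul_one]
      rcases hmem g List.mem_cons_self with ⟨a, rfl | rfl⟩
      · exact h.NF_S a
      · exact h.NF_Sstar a
    · have hNF := ih hl (fun x hx => hmem x (List.mem_cons_of_mem _ hx))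
      rcases hmem g List.mem_cons_self with ⟨a, rfl | rfl⟩
      · exact h.NF_mulS a hNF
      · exact h.NF_mulSstar a hNF

lemma Hyp.ddstar (h : Hyp r s Q S) {d : A} (hd : NF Q S d) :
    d * star d = 0 ∨ ∃ (μ : List E) (v : V),
      d * star d = SP S μ * Q v * star (SP S μ) := by
  rcases hd with rfl | ⟨μ, ν, v, hμ, hν, rfl⟩
  · left; simp
  · right
    refine ⟨μ, v, ?_⟩
    have e0 : star ((SP S μ * Q v) * star (SP S ν * Q v))
        = (SP S ν * Q v) * star (SP S μ * Q v) := by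
      rw [star_mul, star_star]
    have e1 : (SP S μ * Q v * star (SP S ν * Q v)) * star (SP S μ * Q v * star (SP S ν * Q v))
        = (SP S μ * Q v) * (star (SP S ν * Q v) * (SP S ν * Q v)) * star (SP S μ * Q v) := by
      rw [e0]; noncomm_ring
    have e2 : star (SP S μ * Q v) = Q v * star (SP S μ) := by
      rw [star_mul, h.hQsa]
    rw [e1, hν, e2]
    calc SP S μ * Q v * Q v * (Q v * star (SP S μ))
        = SP S μ * ((Q v * Q v) * Q v) * star (SP S μ) := by noncomm_ring
      _ = SP S μ * Q v * star (SP S μ) := by rw [h.hQproj, h.hQproj]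

end CKAux


/-- Let `E = (E⁰, E¹, r, s)` be a directed graph and let `{Q_v}, {S_a}` be a
Cuntz–Krieger `E`-family in a C*-algebra `A`: the `Q_v` are mutually orthogonal
projections, `S_a* S_b = 0` for `a ≠ b`, `S_a* S_a = Q_{s(a)}`, and
`S_a S_a* ≤ Q_{r(a)}` (equivalently `Q_{r(a)} S_a = S_a`).  Then for every `a ∈ E¹`
and every element `d` of the multiplicative semigroup generated by
`{ S_a } ∪ { S_a* }`, both `S_a S_a*` and `S_a* S_a` commute with `d d*`. -/
theorem edge_projections_commute_with_range_projections
    (V E : Type*) (r s : E → V) (A : Type*) [CStarAlgebra A]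
    (Q : V → A) (S : E → A)
    (hQsa : ∀ v : V, star (Q v) = Q v)
    (hQproj : ∀ v : V, Q v * Q v = Q v)
    (hQorth : ∀ v w : V, v ≠ w → Q v * Q w = 0)
    (hSorth : ∀ a b : E, a ≠ b → star (S a) * S b = 0)
    (hSQ : ∀ a : E, star (S a) * S a = Q (s a))
    (hQS : ∀ a : E, Q (r a) * S a = S a) :
    ∀ a : E, ∀ d ∈ Subsemigroup.closure {x : A | ∃ a : E, x = S a ∨ x = star (S a)},
      Commute (S a * star (S a)) (d * star d) ∧
      Commute (star (S a) * S a) (d * star d) := by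
  intro a d hd
  have h : CKAux.Hyp r s Q S := ⟨hQsa, hQproj, hQorth, hSorth, hSQ, hQS⟩
  obtain ⟨l, hl, hlG, rfl⟩ := CKAux.exists_list hd
  have hNF := h.NF_prod l hl hlG
  rcases h.ddstar hNF with h0 | ⟨μ, v, he⟩
  · rw [h0]
    exact ⟨Commute.zero_right _, Commute.zero_right _⟩
  · rw [he]
    constructor
    · exact h.Pcomm a μ v
    · rw [hSQ]
      exact h.Qcomm μ v (s a)
end
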